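/- arXiv:2506.10854 — 3 statements merged into one kernel-verified Lean document; each statement's English description precedes it below -/
import Mathlib

section
/- Given a DAG G, a capacity r, and a valid PRBP pebbling strategy of I/O cost C, there exists a (2r)-dominator partition of the node set V into k = ⌈C/r⌉ classes (so r·k ≥ C ≥ r·(k−1)). Consequently, OPT_PRBP(G,r) ≥ r · (MIN_dom(2r) − 1), where MIN_dom(S) is the minimum number of classes over all S-dominator partitions of G. -/
open scoped Classical

/-! ### Directed graphs / DAGs -/

structure DirGraph (V : Type) where
  E : V → V → Prop

namespace DirGraph

variable {V : Type}

def Acyclic (G : DirGraph V) : Prop := ∀ v, ¬ Relation.TransGen G.E v v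

def IsSource (G : DirGraph V) (v : V) : Prop := ∀ u, ¬ G.E u v

def IsSink (G : DirGraph V) (v : V) : Prop := ∀ u, ¬ G.E v u

def NoIsolated (G : DirGraph V) : Prop := ∀ v, (∃ u, G.E u v) ∨ (∃ u, G.E v u)

noncomputable def inDeg (G : DirGraph V) (v : V) : ℕ := {u | G.E u v}.ncard

noncomputable def outDeg (G : DirGraph V) (v : V) : ℕ := {u | G.E v u}.ncard

noncomputable def maxInDeg (G : DirGraph V) [Fintype V] : ℕ :=
  Finset.univ.sup G.inDeg

noncomputable def maxOutDeg (G : DirGraph V) [Fintype V] : ℕ :=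
  Finset.univ.sup G.outDeg

end DirGraph

/-! ### The (one-shot) red-blue pebble game (RBP) -/

structure RBPState (V : Type) where
  red : Finset V
  blue : Finset V
  computed : Finset V

inductive RBPMove (V : Type) where
  | save : V → RBPMove V
  | load : V → RBPMove V
  | compute : V → RBPMove V
  | delete : V → RBPMove V

def RBPMove.ioCost {V : Type} : RBPMove V → ℕ
  | .save _ => 1
  | .load _ => 1
  | _ => 0

variable {V : Type} [Fintype V] [DecidableEq V]

def RBPStep (G : DirGraph V) (r : ℕ) (s : RBPState V) :
    RBPMove V → RBPState V → Prop
  | .save v, t => v ∈ s.red ∧ t = { s with blue := insert v s.blue }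
  | .load v, t => v ∈ s.blue ∧ (insert v s.red).card ≤ r ∧
      t = { s with red := insert v s.red }
  | .compute v, t => ¬ G.IsSource v ∧ v ∉ s.computed ∧
      (∀ u, G.E u v → u ∈ s.red) ∧ (insert v s.red).card ≤ r ∧
      t = { s with red := insert v s.red, computed := insert v s.computed }
  | .delete v, t => v ∈ s.red ∧ t = { s with red := s.red.erase v }

inductive RBPReaches (G : DirGraph V) (r : ℕ) :
    RBPState V → List (RBPMove V) → RBPState V → Prop
  | nil (s : RBPState V) : RBPReaches G r s [] s
  | cons {s t u : RBPState V} {m : RBPMove V} {L : List (RBPMove V)} :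
      RBPStep G r s m t → RBPReaches G r t L u → RBPReaches G r s (m :: L) u

noncomputable def RBPInit (G : DirGraph V) : RBPState V :=
  ⟨∅, Finset.univ.filter (fun v => G.IsSource v), ∅⟩

def RBPValid (G : DirGraph V) (r : ℕ) (L : List (RBPMove V)) : Prop :=
  ∃ t, RBPReaches G r (RBPInit G) L t ∧ ∀ v, G.IsSink v → v ∈ t.blue

def RBPCost {V : Type} (L : List (RBPMove V)) : ℕ := (L.map RBPMove.ioCost).sum

noncomputable def optRBP (G : DirGraph V) (r : ℕ) : ℕ∞ :=
  sInf ((fun L => (RBPCost L : ℕ∞)) '' {L | RBPValid G r L})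

/-! ### The partial-computing red-blue pebble game (PRBP) -/

structure PRBPState (V : Type) where
  lred : Finset V
  dred : Finset V
  blue : Finset V
  marked : Finset (V × V)

def PRBPState.red (s : PRBPState V) : Finset V := s.lred ∪ s.dred

inductive PRBPMove (V : Type) where
  | save : V → PRBPMove V
  | load : V → PRBPMove V
  | pcompute : V → V → PRBPMove V
  | delete : V → PRBPMove V

def PRBPMove.ioCost {V : Type} : PRBPMove V → ℕ
  | .save _ => 1
  | .load _ => 1
  | _ => 0

def PRBPStep (G : DirGraph V) (r : ℕ) (s : PRBPState V) :
    PRBPMove V → PRBPState V → Prop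
  | .save v, t => v ∈ s.dred ∧
      t = { s with lred := insert v s.lred, dred := s.dred.erase v,
                   blue := insert v s.blue }
  | .load v, t => v ∈ s.blue ∧ ((insert v s.lred) ∪ s.dred).card ≤ r ∧
      t = { s with lred := insert v s.lred }
  | .pcompute u v, t => G.E u v ∧ (u, v) ∉ s.marked ∧
      (∀ w, G.E w u → (w, u) ∈ s.marked) ∧ u ∈ s.red ∧
      (v ∈ s.red ∨ (v ∉ s.red ∧ v ∉ s.blue)) ∧
      ((s.lred.erase v) ∪ (insert v s.dred)).card ≤ r ∧
      t = { s with lred := s.lred.erase v, dred := insert v s.dred,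
                   blue := s.blue.erase v, marked := insert (u, v) s.marked }
  | .delete v, t =>
      (v ∈ s.lred ∧ t = { s with lred := s.lred.erase v }) ∨
      (v ∈ s.dred ∧ (∀ w, G.E v w → (v, w) ∈ s.marked) ∧
        t = { s with dred := s.dred.erase v })

inductive PRBPReaches (G : DirGraph V) (r : ℕ) :
    PRBPState V → List (PRBPMove V) → PRBPState V → Prop
  | nil (s : PRBPState V) : PRBPReaches G r s [] s
  | cons {s t u : PRBPState V} {m : PRBPMove V} {L : List (PRBPMove V)} :
      PRBPStep G r s m t → PRBPReaches G r t L u → PRBPReaches G r s (m :: L) u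

noncomputable def PRBPInit (G : DirGraph V) : PRBPState V :=
  ⟨∅, ∅, Finset.univ.filter (fun v => G.IsSource v), ∅⟩

def PRBPValid (G : DirGraph V) (r : ℕ) (L : List (PRBPMove V)) : Prop :=
  ∃ t, PRBPReaches G r (PRBPInit G) L t ∧ (∀ v, G.IsSink v → v ∈ t.blue) ∧
    ∀ u v, G.E u v → (u, v) ∈ t.marked

def PRBPCost {V : Type} (L : List (PRBPMove V)) : ℕ := (L.map PRBPMove.ioCost).sum

noncomputable def optPRBP (G : DirGraph V) (r : ℕ) : ℕ∞ :=
  sInf ((fun L => (PRBPCost L : ℕ∞)) '' {L | PRBPValid G r L})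

/-- `s` is a state reached by some prefix of the pebbling `L`. -/
def PRBPPrefixState (G : DirGraph V) (r : ℕ) (L : List (PRBPMove V))
    (s : PRBPState V) : Prop :=
  ∃ L₁ L₂, L = L₁ ++ L₂ ∧ PRBPReaches G r (PRBPInit G) L₁ s

/-! ### Paths, dominators, S-partitions -/

/-- A directed path in `G` starting at a source node. -/
def IsSourcePath (G : DirGraph V) (p : List V) : Prop :=
  p ≠ [] ∧ p.Chain' G.E ∧ ∀ h : p ≠ [], G.IsSource (p.head h)

/-- `D` is a dominator for the node set `V₀`. -/
def Dominates (G : DirGraph V) (D : Set V) (V₀ : Set V) : Prop :=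
  ∀ p : List V, IsSourcePath G p → ∀ h : p ≠ [], p.getLast h ∈ V₀ →
    ∃ d ∈ D, d ∈ p

/-- The path `p` contains an edge of `E₀` (two consecutive nodes forming it). -/
def PathContainsEdge (p : List V) (E₀ : Set (V × V)) : Prop :=
  ∃ u v, (u, v) ∈ E₀ ∧ [u, v] <:+: p

/-- `D` is an edge-dominator for the edge set `E₀`. -/
def EdgeDominates (G : DirGraph V) (D : Set V) (E₀ : Set (V × V)) : Prop :=
  ∀ p : List V, IsSourcePath G p → PathContainsEdge p E₀ → ∃ d ∈ D, d ∈ p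

/-- The terminal set of a node set `V₀`: nodes of `V₀` with no out-neighbor in `V₀`. -/
def terminalSet (G : DirGraph V) (V₀ : Set V) : Set V :=
  {v | v ∈ V₀ ∧ ∀ w, G.E v w → w ∉ V₀}

/-- The edge-terminal set of an edge set `E₀`. -/
def edgeTerminalSet (E₀ : Set (V × V)) : Set V :=
  {v | (∃ u, (u, v) ∈ E₀) ∧ ∀ w, (v, w) ∉ E₀}

/-- An `S`-partition of the DAG `G` (Hong–Kung). -/
def IsSPartition (G : DirGraph V) (S : ℕ) (k : ℕ) (P : Fin k → Set V) : Prop :=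
  (∀ v : V, ∃! i, v ∈ P i) ∧
  (∀ i j : Fin k, j < i → ∀ u v, u ∈ P i → v ∈ P j → ¬ G.E u v) ∧
  (∀ i, ∃ D : Set V, D.ncard ≤ S ∧ Dominates G D (P i)) ∧
  (∀ i, (terminalSet G (P i)).ncard ≤ S)

/-- An `S`-dominator partition of the DAG `G`: an `S`-partition without the
terminal-set condition. -/
def IsSDomPartition (G : DirGraph V) (S : ℕ) (k : ℕ) (P : Fin k → Set V) : Prop :=
  (∀ v : V, ∃! i, v ∈ P i) ∧
  (∀ i j : Fin k, j < i → ∀ u v, u ∈ P i → v ∈ P j → ¬ G.E u v) ∧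
  (∀ i, ∃ D : Set V, D.ncard ≤ S ∧ Dominates G D (P i))

/-- An `S`-edge partition of the DAG `G`. -/
def IsSEdgePartition (G : DirGraph V) (S : ℕ) (k : ℕ)
    (P : Fin k → Set (V × V)) : Prop :=
  (∀ i, P i ⊆ {e | G.E e.1 e.2}) ∧
  (∀ u v, G.E u v → ∃! i, (u, v) ∈ P i) ∧
  (∀ i j : Fin k, i < j → ∀ u v w, G.E u v → G.E v w →
      ¬ ((v, w) ∈ P i ∧ (u, v) ∈ P j)) ∧
  (∀ i, ∃ D : Set V, D.ncard ≤ S ∧ EdgeDominates G D (P i)) ∧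
  (∀ i, (edgeTerminalSet (P i)).ncard ≤ S)

noncomputable def minEdgePartition (G : DirGraph V) (S : ℕ) : ℕ :=
  sInf {k | ∃ P : Fin k → Set (V × V), IsSEdgePartition G S k P}

noncomputable def minDomPartition (G : DirGraph V) (S : ℕ) : ℕ :=
  sInf {k | ∃ P : Fin k → Set V, IsSDomPartition G S k P}

noncomputable def minSPartition (G : DirGraph V) (S : ℕ) : ℕ :=
  sInf {k | ∃ P : Fin k → Set V, IsSPartition G S k P}
namespace S11
set_option linter.unusedSectionVars false
open scoped Classical

variable {V : Type} [Fintype V] [DecidableEq V]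

/-- Extract a state trace from a Reaches derivation. -/
lemma exists_trace {G : DirGraph V} {r : ℕ} {s t : PRBPState V} {L : List (PRBPMove V)}
    (h : PRBPReaches G r s L t) :
    ∃ st : ℕ → PRBPState V, st 0 = s ∧
      (∀ j (hj : j < L.length), PRBPStep G r (st j) (L.get ⟨j, hj⟩) (st (j+1))) ∧
      (∀ j, L.length ≤ j → st j = t) := by
  induction h with
  | nil s => exact ⟨fun _ => s, rfl, fun j hj => absurd hj (by simp), fun _ _ => rfl⟩
  | @cons s t u m L hstep _ ih =>
    obtain ⟨st, h0, hs, hf⟩ := ih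
    refine ⟨fun j => Nat.rec s (fun j _ => st j) j, rfl, ?_, ?_⟩
    · intro j hj
      cases j with
      | zero => simpa [h0] using hstep
      | succ j => exact hs j (by simpa using hj)
    · intro j hj
      cases j with
      | zero => simp at hj
      | succ j => exact hf j (by simpa using hj)

section StepLemmas

variable {G : DirGraph V} {r : ℕ} {s t : PRBPState V} {m : PRBPMove V}

lemma step_marked_mono (h : PRBPStep G r s m t) : s.marked ⊆ t.marked := by
  cases m with
  | save v => obtain ⟨-, rfl⟩ := h; exact fun e he => he
  | load v => obtain ⟨-, -, rfl⟩ := h; exact fun e he => he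
  | pcompute u v => obtain ⟨-, -, -, -, -, -, rfl⟩ := h; exact fun e he => Finset.mem_insert_of_mem he
  | delete v =>
    rcases h with ⟨-, rfl⟩ | ⟨-, -, rfl⟩ <;> exact fun e he => he

end StepLemmas

end S11
section StepLemmas2
open S11
set_option linter.unusedSectionVars false
variable {V : Type} [Fintype V] [DecidableEq V]
variable {G : DirGraph V} {r : ℕ} {s t : PRBPState V} {m : PRBPMove V} {v : V}

lemma mem_red {v : V} {s : PRBPState V} : v ∈ s.red ↔ v ∈ s.lred ∨ v ∈ s.dred :=
  Finset.mem_union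

lemma step_red_card (h : PRBPStep G r s m t) (hs : s.red.card ≤ r) : t.red.card ≤ r := by
  cases m with
  | save v =>
    obtain ⟨hv, rfl⟩ := h
    refine le_trans (Finset.card_le_card ?_) hs
    intro x hx
    rcases mem_red.1 hx with hx | hx
    · rcases Finset.mem_insert.1 hx with rfl | hx
      · exact mem_red.2 (Or.inr hv)
      · exact mem_red.2 (Or.inl hx)
    · exact mem_red.2 (Or.inr (Finset.mem_of_mem_erase hx))
  | load v => obtain ⟨-, hc, rfl⟩ := h; exact hc
  | pcompute u v => obtain ⟨-, -, -, -, -, hc, rfl⟩ := h; exact hc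
  | delete v =>
    rcases h with ⟨hv, rfl⟩ | ⟨hv, -, rfl⟩ <;>
      refine le_trans (Finset.card_le_card ?_) hs <;> intro x hx <;>
      rcases mem_red.1 hx with hx | hx
    · exact mem_red.2 (Or.inl (Finset.mem_of_mem_erase hx))
    · exact mem_red.2 (Or.inr hx)
    · exact mem_red.2 (Or.inl hx)
    · exact mem_red.2 (Or.inr (Finset.mem_of_mem_erase hx))

lemma step_lred_blue (h : PRBPStep G r s m t) (hs : s.lred ⊆ s.blue) : t.lred ⊆ t.blue := by
  cases m with
  | save v =>
    obtain ⟨hv, rfl⟩ := h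
    intro x hx
    rcases Finset.mem_insert.1 hx with rfl | hx
    · exact Finset.mem_insert_self _ _
    · exact Finset.mem_insert_of_mem (hs hx)
  | load v =>
    obtain ⟨hv, -, rfl⟩ := h
    intro x hx
    rcases Finset.mem_insert.1 hx with rfl | hx
    · exact hv
    · exact hs hx
  | pcompute u v =>
    obtain ⟨-, -, -, -, -, -, rfl⟩ := h
    intro x hx
    simp only [Finset.mem_erase] at hx ⊢
    exact ⟨hx.1, hs hx.2⟩
  | delete v =>
    rcases h with ⟨hv, rfl⟩ | ⟨hv, -, rfl⟩
    · exact fun x hx => hs (Finset.mem_of_mem_erase hx)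
    · exact hs

lemma step_dred_nonsource (h : PRBPStep G r s m t)
    (hs : ∀ x ∈ s.dred, ¬ G.IsSource x) : ∀ x ∈ t.dred, ¬ G.IsSource x := by
  cases m with
  | save v =>
    obtain ⟨hv, rfl⟩ := h
    exact fun x hx => hs x (Finset.mem_of_mem_erase hx)
  | load v => obtain ⟨-, -, rfl⟩ := h; exact hs
  | pcompute u v =>
    obtain ⟨he, -, -, -, -, -, rfl⟩ := h
    intro x hx
    rcases Finset.mem_insert.1 hx with rfl | hx
    · exact fun hsrc => hsrc u he
    · exact hs x hx
  | delete v =>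
    rcases h with ⟨hv, rfl⟩ | ⟨hv, -, rfl⟩
    · exact hs
    · exact fun x hx => hs x (Finset.mem_of_mem_erase hx)

lemma step_Q (h : PRBPStep G r s m t) (hlb : s.lred ⊆ s.blue)
    (hv : v ∈ s.red ∨ v ∈ s.blue) :
    (v ∈ t.red ∨ v ∈ t.blue) ∨ (∀ z, G.E v z → (v, z) ∈ t.marked) := by
  cases m with
  | save w =>
    obtain ⟨hw, rfl⟩ := h
    left
    rcases hv with hv | hv
    · rcases mem_red.1 hv with hv | hv
      · exact Or.inl (mem_red.2 (Or.inl (Finset.mem_insert_of_mem hv)))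
      · by_cases hvw : v = w
        · subst hvw; exact Or.inl (mem_red.2 (Or.inl (Finset.mem_insert_self _ _)))
        · exact Or.inl (mem_red.2 (Or.inr (Finset.mem_erase.2 ⟨hvw, hv⟩)))
    · exact Or.inr (Finset.mem_insert_of_mem hv)
  | load w =>
    obtain ⟨-, -, rfl⟩ := h
    left
    rcases hv with hv | hv
    · rcases mem_red.1 hv with hv | hv
      · exact Or.inl (mem_red.2 (Or.inl (Finset.mem_insert_of_mem hv)))
      · exact Or.inl (mem_red.2 (Or.inr hv))
    · exact Or.inr hv
  | pcompute u w =>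
    obtain ⟨-, -, -, -, -, -, rfl⟩ := h
    left
    by_cases hvw : v = w
    · subst hvw
      exact Or.inl (mem_red.2 (Or.inr (Finset.mem_insert_self _ _)))
    rcases hv with hv | hv
    · rcases mem_red.1 hv with hv | hv
      · exact Or.inl (mem_red.2 (Or.inl (Finset.mem_erase.2 ⟨hvw, hv⟩)))
      · exact Or.inl (mem_red.2 (Or.inr (Finset.mem_insert_of_mem hv)))
    · exact Or.inr (Finset.mem_erase.2 ⟨hvw, hv⟩)
  | delete w =>
    rcases h with ⟨hw, rfl⟩ | ⟨hw, hmk, rfl⟩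
    · left
      rcases hv with hv | hv
      · rcases mem_red.1 hv with hv | hv
        · exact Or.inr (hlb hv)
        · exact Or.inl (mem_red.2 (Or.inr hv))
      · exact Or.inr hv
    · by_cases hvw : v = w
      · subst hvw; exact Or.inr hmk
      left
      rcases hv with hv | hv
      · rcases mem_red.1 hv with hv | hv
        · exact Or.inl (mem_red.2 (Or.inl hv))
        · exact Or.inl (mem_red.2 (Or.inr (Finset.mem_erase.2 ⟨hvw, hv⟩)))
      · exact Or.inr hv

lemma step_red_entry (h : PRBPStep G r s m t) (h1 : v ∉ s.red) (h2 : v ∈ t.red) :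
    (m = .load v ∧ v ∈ s.blue) ∨ (∃ q, m = .pcompute q v ∧ G.E q v ∧ v ∉ s.blue) := by
  cases m with
  | save w =>
    obtain ⟨hw, rfl⟩ := h
    exfalso
    rcases mem_red.1 h2 with hv | hv
    · rcases Finset.mem_insert.1 hv with rfl | hv
      · exact h1 (mem_red.2 (Or.inr hw))
      · exact h1 (mem_red.2 (Or.inl hv))
    · exact h1 (mem_red.2 (Or.inr (Finset.mem_of_mem_erase hv)))
  | load w =>
    obtain ⟨hw, -, rfl⟩ := h
    rcases mem_red.1 h2 with hv | hv
    · rcases Finset.mem_insert.1 hv with rfl | hv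
      · exact Or.inl ⟨rfl, hw⟩
      · exact absurd ((mem_red (s := s)).2 (Or.inl hv)) h1
    · exact absurd ((mem_red (s := s)).2 (Or.inr hv)) h1
  | pcompute q w =>
    obtain ⟨he, -, -, -, hpre, -, rfl⟩ := h
    have hvw : v = w := by
      rcases mem_red.1 h2 with hv | hv
      · exact absurd ((mem_red (s := s)).2 (Or.inl (Finset.mem_of_mem_erase hv))) h1
      · rcases Finset.mem_insert.1 hv with rfl | hv
        · rfl
        · exact absurd ((mem_red (s := s)).2 (Or.inr hv)) h1
    subst hvw
    refine Or.inr ⟨q, rfl, he, ?_⟩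
    rcases hpre with hv | hv
    · exact absurd hv h1
    · exact hv.2
  | delete w =>
    exfalso
    rcases h with ⟨hw, rfl⟩ | ⟨hw, -, rfl⟩ <;> rcases mem_red.1 h2 with hv | hv
    · exact h1 (mem_red.2 (Or.inl (Finset.mem_of_mem_erase hv)))
    · exact h1 (mem_red.2 (Or.inr hv))
    · exact h1 (mem_red.2 (Or.inl hv))
    · exact h1 (mem_red.2 (Or.inr (Finset.mem_of_mem_erase hv)))

lemma step_blue_entry (h : PRBPStep G r s m t) (h1 : v ∉ s.blue) (h2 : v ∈ t.blue) :
    m = .save v ∧ v ∈ s.dred := by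
  cases m with
  | save w =>
    obtain ⟨hw, rfl⟩ := h
    rcases Finset.mem_insert.1 h2 with rfl | hv
    · exact ⟨rfl, hw⟩
    · exact absurd hv h1
  | load w => obtain ⟨-, -, rfl⟩ := h; exact absurd h2 h1
  | pcompute q w =>
    obtain ⟨-, -, -, -, -, -, rfl⟩ := h
    exact absurd (Finset.mem_of_mem_erase h2) h1
  | delete w => rcases h with ⟨-, rfl⟩ | ⟨-, -, rfl⟩ <;> exact absurd h2 h1

lemma step_blue_exit (h : PRBPStep G r s m t) (h1 : v ∈ s.blue) (h2 : v ∉ t.blue) :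
    ∃ q, m = .pcompute q v ∧ v ∈ s.red := by
  cases m with
  | save w =>
    obtain ⟨-, rfl⟩ := h; exact absurd (Finset.mem_insert_of_mem h1) h2
  | load w => obtain ⟨-, -, rfl⟩ := h; exact absurd h1 h2
  | pcompute q w =>
    obtain ⟨-, -, -, -, hpre, -, rfl⟩ := h
    have hvw : v = w := by
      by_contra hvw
      exact h2 (Finset.mem_erase.2 ⟨hvw, h1⟩)
    subst hvw
    rcases hpre with hv | hv
    · exact ⟨q, rfl, hv⟩
    · exact absurd h1 hv.2
  | delete w => rcases h with ⟨-, rfl⟩ | ⟨-, -, rfl⟩ <;> exact absurd h1 h2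

lemma step_lred_entry (h : PRBPStep G r s m t) (h1 : v ∉ s.lred) (h2 : v ∈ t.lred) :
    m = .load v ∨ (m = .save v ∧ v ∈ s.dred) := by
  cases m with
  | save w =>
    obtain ⟨hw, rfl⟩ := h
    rcases Finset.mem_insert.1 h2 with rfl | hv
    · exact Or.inr ⟨rfl, hw⟩
    · exact absurd hv h1
  | load w =>
    obtain ⟨-, -, rfl⟩ := h
    rcases Finset.mem_insert.1 h2 with rfl | hv
    · exact Or.inl rfl
    · exact absurd hv h1
  | pcompute q w =>
    obtain ⟨-, -, -, -, -, -, rfl⟩ := h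
    exact absurd (Finset.mem_of_mem_erase h2) h1
  | delete w =>
    rcases h with ⟨-, rfl⟩ | ⟨-, -, rfl⟩
    · exact absurd (Finset.mem_of_mem_erase h2) h1
    · exact absurd h2 h1

lemma step_marked_entry {e : V × V} (h : PRBPStep G r s m t)
    (h1 : e ∉ s.marked) (h2 : e ∈ t.marked) : m = .pcompute e.1 e.2 := by
  cases m with
  | save w => obtain ⟨-, rfl⟩ := h; exact absurd h2 h1
  | load w => obtain ⟨-, -, rfl⟩ := h; exact absurd h2 h1
  | pcompute q w =>
    obtain ⟨-, -, -, -, -, -, rfl⟩ := h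
    rcases Finset.mem_insert.1 h2 with rfl | hv
    · rfl
    · exact absurd hv h1
  | delete w => rcases h with ⟨-, rfl⟩ | ⟨-, -, rfl⟩ <;> exact absurd h2 h1

end StepLemmas2
namespace S11
set_option linter.unusedSectionVars false

variable {V : Type} [Fintype V] [DecidableEq V]

/-- Bundled hypotheses: `st` is the state trace of a valid pebbling `L`. -/
structure Trace (G : DirGraph V) (r : ℕ) (L : List (PRBPMove V))
    (st : ℕ → PRBPState V) : Prop where
  h0 : st 0 = PRBPInit G
  step : ∀ j (hj : j < L.length), PRBPStep G r (st j) (L.get ⟨j, hj⟩) (st (j+1))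
  stab : ∀ j, L.length ≤ j → st j = st L.length
  sinks : ∀ v, G.IsSink v → v ∈ (st L.length).blue
  allmk : ∀ u v, G.E u v → (u, v) ∈ (st L.length).marked

variable {G : DirGraph V} {r : ℕ} {L : List (PRBPMove V)} {st : ℕ → PRBPState V}

lemma Trace.inv (T : Trace G r L st) (P : PRBPState V → Prop) (h0 : P (st 0))
    (hs : ∀ j (hj : j < L.length), P (st j) → P (st (j+1))) : ∀ j, P (st j) := by
  intro j
  induction j with
  | zero => exact h0
  | succ j ih =>
    by_cases hj : j < L.length
    · exact hs j hj ih
    · push_neg at hj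
      rw [T.stab (j+1) (le_trans hj (Nat.le_succ j)), ← T.stab j hj]
      exact ih

lemma Trace.red_card (T : Trace G r L st) : ∀ j, (st j).red.card ≤ r := by
  refine T.inv (fun s => s.red.card ≤ r) ?_ (fun j hj h => step_red_card (T.step j hj) h)
  rw [T.h0]
  simp [PRBPInit, PRBPState.red]

lemma Trace.lred_blue (T : Trace G r L st) : ∀ j, (st j).lred ⊆ (st j).blue := by
  refine T.inv (fun s => s.lred ⊆ s.blue) ?_ (fun j hj h => step_lred_blue (T.step j hj) h)
  rw [T.h0]
  simp [PRBPInit]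

lemma Trace.dred_ns (T : Trace G r L st) :
    ∀ j, ∀ x ∈ (st j).dred, ¬ G.IsSource x := by
  refine T.inv (fun s => ∀ x ∈ s.dred, ¬ G.IsSource x) ?_ (fun j hj h => step_dred_nonsource (T.step j hj) h)
  rw [T.h0]
  simp [PRBPInit]

lemma Trace.step_any (T : Trace G r L st) (j : ℕ) :
    (∃ hj : j < L.length, PRBPStep G r (st j) (L.get ⟨j, hj⟩) (st (j+1))) ∨
      st (j+1) = st j := by
  by_cases hj : j < L.length
  · exact Or.inl ⟨hj, T.step j hj⟩
  · push_neg at hj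
    exact Or.inr (by rw [T.stab (j+1) (le_trans hj (Nat.le_succ j)), ← T.stab j hj])

lemma Trace.marked_mono (T : Trace G r L st) {j j' : ℕ} (h : j ≤ j') :
    (st j).marked ⊆ (st j').marked := by
  induction j' with
  | zero => cases Nat.le_zero.1 h; exact fun e he => he
  | succ j' ih =>
    rcases eq_or_lt_of_le h with rfl | h'
    · exact fun e he => he
    · have h2 : j ≤ j' := Nat.lt_succ_iff.1 h'
      refine subset_trans (ih h2) ?_
      rcases T.step_any j' with ⟨hj, hs⟩ | heq
      · exact step_marked_mono hs
      · rw [heq]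

lemma Trace.Qmono (T : Trace G r L st) {a b : ℕ} (v : V) (hab : a ≤ b)
    (hv : v ∈ (st a).red ∨ v ∈ (st a).blue) :
    (v ∈ (st b).red ∨ v ∈ (st b).blue) ∨ (∀ z, G.E v z → (v, z) ∈ (st b).marked) := by
  induction b with
  | zero => cases Nat.le_zero.1 hab; exact Or.inl hv
  | succ b ih =>
    rcases eq_or_lt_of_le hab with rfl | h'
    · exact Or.inl hv
    · have h2 : a ≤ b := Nat.lt_succ_iff.1 h'
      rcases ih h2 with hb | hb
      · rcases T.step_any b with ⟨hj, hs⟩ | heq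
        · exact step_Q hs (T.lred_blue b) hb
        · rw [heq]; exact Or.inl hb
      · exact Or.inr fun z hz => T.marked_mono (Nat.le_succ b) (hb z hz)

lemma exists_exit (f : ℕ → Prop) {a b : ℕ} (ha : f a) (hb : ¬ f b) (hab : a ≤ b) :
    ∃ j, a ≤ j ∧ j < b ∧ f j ∧ ¬ f (j+1) := by
  induction b with
  | zero => cases Nat.le_zero.1 hab; exact absurd ha hb
  | succ b ih =>
    rcases eq_or_lt_of_le hab with rfl | h'
    · exact absurd ha hb
    · have h2 : a ≤ b := Nat.lt_succ_iff.1 h'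
      by_cases hfb : f b
      · exact ⟨b, h2, Nat.lt_succ_self b, hfb, hb⟩
      · obtain ⟨j, h1, hlt, h3, h4⟩ := ih hfb h2
        exact ⟨j, h1, Nat.lt_succ_of_lt hlt, h3, h4⟩

/-! ### Event times -/

noncomputable def mt (st : ℕ → PRBPState V) (e : V × V) : ℕ :=
  sInf {j | e ∈ (st (j+1)).marked}

noncomputable def Mt (G : DirGraph V) (st : ℕ → PRBPState V) (v : V) : ℕ :=
  sInf {j | ∀ u, G.E u v → (u, v) ∈ (st (j+1)).marked}

noncomputable def fl (st : ℕ → PRBPState V) (v : V) : ℕ :=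
  sInf {j | v ∈ (st (j+1)).lred}

noncomputable def bt (G : DirGraph V) (st : ℕ → PRBPState V) (v : V) : ℕ :=
  sInf {j | Mt G st v ≤ j ∧ v ∈ (st (j+1)).blue}

lemma Trace.len_pos (T : Trace G r L st) {u v : V} (he : G.E u v) : 1 ≤ L.length := by
  by_contra h
  push_neg at h
  have h0 : L.length = 0 := Nat.lt_one_iff.1 h
  have h1 := T.allmk u v he
  rw [h0, T.h0] at h1
  simp [PRBPInit] at h1

lemma Trace.mt_le (T : Trace G r L st) {u v : V} (he : G.E u v) :
    mt st (u, v) ≤ L.length - 1 := by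
  apply Nat.sInf_le
  simp only [Set.mem_setOf_eq, Nat.sub_add_cancel (T.len_pos he)]
  exact T.allmk u v he

lemma Trace.mt_mem (T : Trace G r L st) {u v : V} (he : G.E u v) :
    (u, v) ∈ (st (mt st (u, v) + 1)).marked := by
  have h1 : mt st (u, v) ∈ {j | (u, v) ∈ (st (j+1)).marked} := by
    refine Nat.sInf_mem ⟨L.length - 1, ?_⟩
    simp only [Set.mem_setOf_eq, Nat.sub_add_cancel (T.len_pos he)]
    exact T.allmk u v he
  exact h1

lemma Trace.mt_lt_len (T : Trace G r L st) {u v : V} (he : G.E u v) :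
    mt st (u, v) < L.length :=
  lt_of_le_of_lt (T.mt_le he) (Nat.sub_lt (T.len_pos he) Nat.one_pos)

lemma Trace.mt_not (T : Trace G r L st) {u v : V} (he : G.E u v) :
    (u, v) ∉ (st (mt st (u, v))).marked := by
  cases hmt : mt st (u, v) with
  | zero => rw [T.h0]; simp [PRBPInit]
  | succ j =>
    have hj : j < mt st (u, v) := hmt ▸ Nat.lt_succ_self j
    exact Nat.notMem_of_lt_sInf hj

lemma Trace.marked_iff (T : Trace G r L st) {u v : V} (he : G.E u v) (j : ℕ) :
    (u, v) ∈ (st j).marked ↔ mt st (u, v) < j := by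
  constructor
  · intro h
    by_contra hlt
    push_neg at hlt
    exact T.mt_not he (T.marked_mono hlt h)
  · intro h
    exact T.marked_mono (Nat.succ_le_of_lt h) (T.mt_mem he)

lemma Trace.mt_move (T : Trace G r L st) {u v : V} (he : G.E u v) :
    L.get ⟨mt st (u, v), T.mt_lt_len he⟩ = .pcompute u v :=
  step_marked_entry (T.step _ (T.mt_lt_len he)) (T.mt_not he) (T.mt_mem he)

lemma Trace.mt_step (T : Trace G r L st) {u v : V} (he : G.E u v) :
    PRBPStep G r (st (mt st (u, v))) (.pcompute u v) (st (mt st (u, v) + 1)) := by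
  have h := T.step _ (T.mt_lt_len he)
  rwa [T.mt_move he] at h

end S11
namespace S11
set_option linter.unusedSectionVars false
set_option linter.unusedVariables false

variable {V : Type} [Fintype V] [DecidableEq V]
variable {G : DirGraph V} {r : ℕ} {L : List (PRBPMove V)} {st : ℕ → PRBPState V}

lemma ex_in {v : V} (hns : ¬ G.IsSource v) : ∃ u, G.E u v := by
  unfold DirGraph.IsSource at hns
  push_neg at hns
  exact hns

lemma Trace.Mt_mem_all (T : Trace G r L st) {v : V} (hns : ¬ G.IsSource v) :
    ∀ u, G.E u v → (u, v) ∈ (st (Mt G st v + 1)).marked := by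
  obtain ⟨u0, hu0⟩ := ex_in hns
  have h1 : Mt G st v ∈ {j | ∀ u, G.E u v → (u, v) ∈ (st (j+1)).marked} := by
    refine Nat.sInf_mem ⟨L.length - 1, ?_⟩
    intro u hu
    simp only [Set.mem_setOf_eq, Nat.sub_add_cancel (T.len_pos hu0)]
    exact T.allmk u v hu
  exact h1

lemma Trace.Mt_le (T : Trace G r L st) {v : V} (hns : ¬ G.IsSource v) :
    Mt G st v ≤ L.length - 1 := by
  obtain ⟨u0, hu0⟩ := ex_in hns
  apply Nat.sInf_le
  intro u hu
  simp only [Set.mem_setOf_eq, Nat.sub_add_cancel (T.len_pos hu0)]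
  exact T.allmk u v hu

lemma Trace.Mt_lt_len (T : Trace G r L st) {v : V} (hns : ¬ G.IsSource v) :
    Mt G st v < L.length := by
  obtain ⟨u0, hu0⟩ := ex_in hns
  exact lt_of_le_of_lt (T.Mt_le hns) (Nat.sub_lt (T.len_pos hu0) Nat.one_pos)

lemma Trace.Mt_not (T : Trace G r L st) {v : V} (hns : ¬ G.IsSource v) :
    ¬ ∀ u, G.E u v → (u, v) ∈ (st (Mt G st v)).marked := by
  obtain ⟨u0, hu0⟩ := ex_in hns
  cases hmt : Mt G st v with
  | zero =>
    intro hall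
    have := hall u0 hu0
    rw [T.h0] at this
    simp [PRBPInit] at this
  | succ j =>
    have hj : j < Mt G st v := hmt ▸ Nat.lt_succ_self j
    exact Nat.notMem_of_lt_sInf hj

lemma Trace.all_marked_iff (T : Trace G r L st) {v : V} (hns : ¬ G.IsSource v) (j : ℕ) :
    (∀ u, G.E u v → (u, v) ∈ (st j).marked) ↔ Mt G st v < j := by
  constructor
  · intro h
    by_contra hlt
    push_neg at hlt
    exact T.Mt_not hns (fun u hu => T.marked_mono hlt (h u hu))
  · intro h u hu
    exact T.marked_mono (Nat.succ_le_of_lt h) (T.Mt_mem_all hns u hu)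

lemma Trace.mt_le_Mt (T : Trace G r L st) {u v : V} (he : G.E u v) :
    mt st (u, v) ≤ Mt G st v := by
  have hns : ¬ G.IsSource v := fun h => h u he
  have h := T.Mt_mem_all hns u he
  exact Nat.lt_succ_iff.1 ((T.marked_iff he _).1 h)

lemma Trace.Mt_move (T : Trace G r L st) {v : V} (hns : ¬ G.IsSource v) :
    ∃ q, G.E q v ∧ L.get ⟨Mt G st v, T.Mt_lt_len hns⟩ = .pcompute q v := by
  have h1 := T.Mt_not hns
  push_neg at h1
  obtain ⟨x, hx, hxm⟩ := h1
  exact ⟨x, hx, step_marked_entry (T.step _ (T.Mt_lt_len hns)) hxm (T.Mt_mem_all hns x hx)⟩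

lemma Trace.Mt_post (T : Trace G r L st) {v : V} (hns : ¬ G.IsSource v) :
    v ∈ (st (Mt G st v + 1)).dred ∧ v ∉ (st (Mt G st v + 1)).blue := by
  obtain ⟨q, hq, hmove⟩ := T.Mt_move hns
  have hs := T.step _ (T.Mt_lt_len hns)
  rw [hmove] at hs
  obtain ⟨-, -, -, -, -, -, heq⟩ := hs
  rw [heq]
  exact ⟨Finset.mem_insert_self _ _, fun h => (Finset.mem_erase.1 h).1 rfl⟩

/-! fl -/

lemma Trace.fl_lt_of_lred (T : Trace G r L st) {v : V} {j : ℕ} (hv : v ∈ (st j).lred) :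
    fl st v < j := by
  cases j with
  | zero => rw [T.h0] at hv; simp [PRBPInit] at hv
  | succ j => exact Nat.lt_succ_of_le (Nat.sInf_le hv)

lemma Trace.src_lred_at_mt (T : Trace G r L st) {v z : V} (hsrc : G.IsSource v)
    (hz : G.E v z) : v ∈ (st (mt st (v, z))).lred := by
  have hs := T.mt_step hz
  obtain ⟨-, -, -, hred, -, -, -⟩ := hs
  rcases mem_red.1 hred with h | h
  · exact h
  · exact absurd hsrc (T.dred_ns _ v h)

lemma Trace.fl_mem (T : Trace G r L st) {v z : V} (hsrc : G.IsSource v)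
    (hz : G.E v z) : v ∈ (st (fl st v + 1)).lred := by
  have h0 := T.src_lred_at_mt hsrc hz
  have hlt := T.fl_lt_of_lred h0
  have h1 : fl st v ∈ {j | v ∈ (st (j+1)).lred} := by
    refine Nat.sInf_mem ?_
    cases hmt : mt st (v, z) with
    | zero => rw [hmt] at h0; rw [T.h0] at h0; simp [PRBPInit] at h0
    | succ j => exact ⟨j, by rw [hmt] at h0; exact h0⟩
  exact h1

lemma Trace.fl_not (T : Trace G r L st) (v : V) : v ∉ (st (fl st v)).lred := by
  cases hfl : fl st v with
  | zero => rw [T.h0]; simp [PRBPInit]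
  | succ j =>
    have hj : j < fl st v := hfl ▸ Nat.lt_succ_self j
    exact Nat.notMem_of_lt_sInf hj

lemma Trace.fl_lt_len (T : Trace G r L st) {v z : V} (hsrc : G.IsSource v)
    (hz : G.E v z) : fl st v < L.length :=
  lt_trans (T.fl_lt_of_lred (T.src_lred_at_mt hsrc hz)) (T.mt_lt_len hz)

lemma Trace.fl_move (T : Trace G r L st) {v z : V} (hsrc : G.IsSource v)
    (hz : G.E v z) : L.get ⟨fl st v, T.fl_lt_len hsrc hz⟩ = .load v := by
  rcases step_lred_entry (T.step _ (T.fl_lt_len hsrc hz)) (T.fl_not v)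
      (T.fl_mem hsrc hz) with h | ⟨-, hd⟩
  · exact h
  · exact absurd hsrc (T.dred_ns _ v hd)

/-! bt -/

lemma Trace.bt_mem (T : Trace G r L st) {v : V} (hns : ¬ G.IsSource v)
    (hsink : G.IsSink v) :
    Mt G st v ≤ bt G st v ∧ v ∈ (st (bt G st v + 1)).blue := by
  obtain ⟨u0, hu0⟩ := ex_in hns
  have h1 : bt G st v ∈ {j | Mt G st v ≤ j ∧ v ∈ (st (j+1)).blue} := by
    refine Nat.sInf_mem ⟨L.length - 1, T.Mt_le hns, ?_⟩
    rw [Nat.sub_add_cancel (T.len_pos hu0)]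
    exact T.sinks v hsink
  exact h1

lemma Trace.bt_le (T : Trace G r L st) {v : V} (hns : ¬ G.IsSource v)
    (hsink : G.IsSink v) : bt G st v ≤ L.length - 1 := by
  obtain ⟨u0, hu0⟩ := ex_in hns
  refine Nat.sInf_le ⟨T.Mt_le hns, ?_⟩
  rw [Nat.sub_add_cancel (T.len_pos hu0)]
  exact T.sinks v hsink

lemma Trace.bt_lt_len (T : Trace G r L st) {v : V} (hns : ¬ G.IsSource v)
    (hsink : G.IsSink v) : bt G st v < L.length := by
  obtain ⟨u0, hu0⟩ := ex_in hns
  exact lt_of_le_of_lt (T.bt_le hns hsink) (Nat.sub_lt (T.len_pos hu0) Nat.one_pos)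

lemma Trace.bt_gt (T : Trace G r L st) {v : V} (hns : ¬ G.IsSource v)
    (hsink : G.IsSink v) : Mt G st v < bt G st v := by
  rcases eq_or_lt_of_le (T.bt_mem hns hsink).1 with heq | h
  · exact absurd (heq ▸ (T.bt_mem hns hsink).2) (T.Mt_post hns).2
  · exact h

lemma Trace.bt_not (T : Trace G r L st) {v : V} (hns : ¬ G.IsSource v)
    (hsink : G.IsSink v) : v ∉ (st (bt G st v)).blue := by
  have hgt := T.bt_gt hns hsink
  cases hbt : bt G st v with
  | zero => omega
  | succ j =>
    have hjlt : j < bt G st v := hbt ▸ Nat.lt_succ_self j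
    have hj : j ∉ {j | Mt G st v ≤ j ∧ v ∈ (st (j+1)).blue} :=
      Nat.notMem_of_lt_sInf hjlt
    simp only [Set.mem_setOf_eq, not_and] at hj
    intro hb
    exact hj (by omega) (hbt ▸ hb)

lemma Trace.bt_move (T : Trace G r L st) {v : V} (hns : ¬ G.IsSource v)
    (hsink : G.IsSink v) : L.get ⟨bt G st v, T.bt_lt_len hns hsink⟩ = .save v :=
  (step_blue_entry (T.step _ (T.bt_lt_len hns hsink)) (T.bt_not hns hsink)
    (T.bt_mem hns hsink).2).1

end S11
namespace S11
set_option linter.unusedSectionVars false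
set_option linter.unusedVariables false

variable {V : Type} [Fintype V] [DecidableEq V]

noncomputable def io (L : List (PRBPMove V)) (j : ℕ) : ℕ := PRBPCost (L.take j)

lemma io_zero (L : List (PRBPMove V)) : io L 0 = 0 := rfl

lemma io_succ (L : List (PRBPMove V)) {j : ℕ} (hj : j < L.length) :
    io L (j+1) = io L j + (L.get ⟨j, hj⟩).ioCost := by
  unfold io PRBPCost
  rw [← List.take_concat_get hj, List.concat_eq_append, List.map_append, List.sum_append]
  simp

lemma io_stab (L : List (PRBPMove V)) {j : ℕ} (h : L.length ≤ j) :
    io L j = PRBPCost L := by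
  unfold io
  rw [List.take_of_length_le h]

lemma ioCost_le_one {m : PRBPMove V} : m.ioCost ≤ 1 := by
  cases m <;> simp [PRBPMove.ioCost]

lemma io_succ_le (L : List (PRBPMove V)) (j : ℕ) : io L (j+1) ≤ io L j + 1 := by
  by_cases hj : j < L.length
  · rw [io_succ L hj]; exact Nat.add_le_add_left ioCost_le_one _
  · push_neg at hj
    rw [io_stab L (le_trans hj (Nat.le_succ j)), io_stab L hj]
    exact Nat.le_succ _

lemma io_mono (L : List (PRBPMove V)) {j j' : ℕ} (h : j ≤ j') : io L j ≤ io L j' := by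
  induction j' with
  | zero => cases Nat.le_zero.1 h; exact le_refl _
  | succ j' ih =>
    rcases eq_or_lt_of_le h with rfl | h'
    · exact le_refl _
    · have h2 : j ≤ j' := Nat.lt_succ_iff.1 h'
      refine le_trans (ih h2) ?_
      by_cases hj : j' < L.length
      · rw [io_succ L hj]; exact Nat.le_add_right _ _
      · push_neg at hj
        rw [io_stab L (le_trans hj (Nat.le_succ j')), io_stab L hj]

lemma io_le (L : List (PRBPMove V)) (j : ℕ) : io L j ≤ PRBPCost L := by
  by_cases hj : j ≤ L.length
  · rw [← io_stab L (le_refl L.length)]; exact io_mono L hj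
  · push_neg at hj; rw [io_stab L (le_of_lt hj)]

/-- strict increase at an I/O move. -/
lemma io_succ_io (L : List (PRBPMove V)) {j : ℕ} (hj : j < L.length)
    (h : (L.get ⟨j, hj⟩).ioCost = 1) : io L (j+1) = io L j + 1 := by
  rw [io_succ L hj, h]

lemma arith (r C k : ℕ) (hr : 1 ≤ r) (hk : k = (C + r - 1) / r) :
    C ≤ r * k ∧ r * (k - 1) ≤ C ∧ (1 ≤ C → 1 ≤ k ∧ (k - 1) * r < C) := by
  have e := Nat.div_add_mod (C + r - 1) r
  have hm : (C + r - 1) % r < r := Nat.mod_lt _ hr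
  rw [← hk] at e
  rcases Nat.eq_zero_or_pos k with h0 | h1
  · subst h0
    simp only [Nat.mul_zero, Nat.zero_mul] at *
    omega
  · obtain ⟨k', rfl⟩ : ∃ k', k = k' + 1 := ⟨k - 1, by omega⟩
    have e2 : r * (k' + 1) = r * k' + r := Nat.mul_succ r k'
    rw [e2] at e
    simp only [Nat.add_sub_cancel]
    rw [e2, Nat.mul_comm k' r]
    omega

noncomputable def seg (L : List (PRBPMove V)) (r j : ℕ) : ℕ :=
  min (io L j / r) ((PRBPCost L + r - 1) / r - 1)

lemma seg_mono (L : List (PRBPMove V)) (r : ℕ) {j j' : ℕ} (h : j ≤ j') :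
    seg L r j ≤ seg L r j' :=
  min_le_min (Nat.div_le_div_right (io_mono L h)) (le_refl _)

lemma seg_le (L : List (PRBPMove V)) (r j : ℕ) :
    seg L r j ≤ (PRBPCost L + r - 1) / r - 1 := min_le_right _ _

lemma io_ge_of_seg (L : List (PRBPMove V)) {r j i : ℕ} (hr : 1 ≤ r)
    (hj : seg L r j = i) : i * r ≤ io L j := by
  have h1 : i ≤ io L j / r := hj ▸ min_le_left _ _
  exact (Nat.le_div_iff_mul_le hr).1 h1

noncomputable def start (L : List (PRBPMove V)) (r i : ℕ) : ℕ :=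
  sInf {j | i * r ≤ io L j}

lemma start_mem (L : List (PRBPMove V)) {r i : ℕ} (h : i * r ≤ PRBPCost L) :
    i * r ≤ io L (start L r i) := by
  have h1 : start L r i ∈ {j | i * r ≤ io L j} :=
    Nat.sInf_mem ⟨L.length, by simp only [Set.mem_setOf_eq, io_stab L (le_refl _)]; exact h⟩
  exact h1

lemma start_le_len (L : List (PRBPMove V)) {r i : ℕ} (h : i * r ≤ PRBPCost L) :
    start L r i ≤ L.length :=
  Nat.sInf_le (by simp only [Set.mem_setOf_eq, io_stab L (le_refl _)]; exact h)

lemma start_le_of_le (L : List (PRBPMove V)) {r i j : ℕ} (h : i * r ≤ io L j) :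
    start L r i ≤ j := Nat.sInf_le h

lemma start_io_eq (L : List (PRBPMove V)) {r i : ℕ} (h : i * r ≤ PRBPCost L) :
    io L (start L r i) = i * r := by
  refine le_antisymm ?_ (start_mem L h)
  cases hs : start L r i with
  | zero => rw [io_zero]; exact Nat.zero_le _
  | succ j =>
    have hj : j < start L r i := hs ▸ Nat.lt_succ_self j
    have h2 : j ∉ {j | i * r ≤ io L j} := Nat.notMem_of_lt_sInf hj
    simp only [Set.mem_setOf_eq, not_le] at h2
    exact le_trans (io_succ_le L j) (by omega)

lemma seg_start (L : List (PRBPMove V)) {r i : ℕ} (hr : 1 ≤ r)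
    (h : i * r ≤ PRBPCost L) (hik : i ≤ (PRBPCost L + r - 1) / r - 1) :
    seg L r (start L r i) = i := by
  unfold seg
  rw [start_io_eq L h, Nat.mul_div_cancel i hr]
  exact min_eq_left hik

lemma seg_between (L : List (PRBPMove V)) {r i j j' : ℕ} (hr : 1 ≤ r)
    (hik : i ≤ (PRBPCost L + r - 1) / r - 1)
    (h1 : start L r i ≤ j) (h2 : j ≤ j') (h3 : seg L r j' = i) :
    seg L r j = i := by
  have hC : i * r ≤ PRBPCost L := le_trans (io_ge_of_seg L hr h3) (io_le L j')
  have ha : i ≤ seg L r j := (seg_start L hr hC hik) ▸ seg_mono L r h1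
  have hb : seg L r j ≤ i := h3 ▸ seg_mono L r h2
  omega

end S11
namespace S11
set_option linter.unusedSectionVars false
set_option linter.unusedVariables false

variable {V : Type} [Fintype V] [DecidableEq V]
variable {G : DirGraph V} {r : ℕ} {L : List (PRBPMove V)} {st : ℕ → PRBPState V}

lemma Trace.src_dom (T : Trace G r L st) {σ N : ℕ} {D : Set V}
    (hDred : ∀ x ∈ (st σ).red, x ∈ D)
    (hDload : ∀ x j (hj : j < L.length), σ ≤ j → j ≤ N → L.get ⟨j, hj⟩ = .load x → x ∈ D)
    {v : V} (hsrc : G.IsSource v) :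
    ∀ s, σ ≤ s → s ≤ N + 1 → v ∈ (st s).lred → v ∈ D := by
  intro s
  induction s with
  | zero =>
    intro h1 _ h3
    cases Nat.le_zero.1 h1
    exact hDred v (mem_red.2 (Or.inl h3))
  | succ s ih =>
    intro h1 h2 h3
    rcases eq_or_lt_of_le h1 with heq | h1'
    · exact hDred v (by rw [heq]; exact mem_red.2 (Or.inl h3))
    · have hσs : σ ≤ s := Nat.lt_succ_iff.1 h1'
      by_cases h4 : v ∈ (st s).lred
      · exact ih hσs (le_trans (Nat.le_succ s) h2) h4
      · have hslen : s < L.length := by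
          by_contra hs
          push_neg at hs
          rw [T.stab (s+1) (le_trans hs (Nat.le_succ s)), ← T.stab s hs] at h3
          exact h4 h3
        rcases step_lred_entry (T.step s hslen) h4 h3 with hload | ⟨-, hdred⟩
        · exact hDload v s hslen hσs (by omega) hload
        · exact absurd hsrc (T.dred_ns s v hdred)

lemma Trace.dom_main (T : Trace G r L st) {σ N : ℕ} {D : Set V}
    (hDred : ∀ x ∈ (st σ).red, x ∈ D)
    (hDload : ∀ x j (hj : j < L.length), σ ≤ j → j ≤ N → L.get ⟨j, hj⟩ = .load x → x ∈ D) :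
    ∀ M s v (p : List V), p.length * (N + 2) + s ≤ M → σ ≤ s → s ≤ N + 1 →
      v ∈ (st s).red →
      (G.IsSource v ∨ v ∈ (st σ).red ∨ v ∈ (st σ).blue ∨
        ∃ u, G.E u v ∧ (u, v) ∉ (st σ).marked) →
      (∃ z, G.E v z) →
      IsSourcePath G p → (∀ h : p ≠ [], p.getLast h = v) →
      (∀ (q : List V) a b, p = q ++ [a, b] → mt st (a, b) ≤ N) →
      ∃ d ∈ D, d ∈ p := by
  intro M
  induction M with
  | zero =>
    intro s v p hM hσs hsN hred hH hout hpath hlast hLE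
    exfalso
    have h0 : p.length * (N + 2) = 0 := by omega
    rcases Nat.mul_eq_zero.1 h0 with h1 | h1
    · exact hpath.1 (List.length_eq_zero_iff.1 h1)
    · omega
  | succ M ih =>
    intro s v p hM hσs hsN hred hH hout hpath hlast hLE
    obtain ⟨hne, hch, hhd⟩ := hpath
    have hvp : v ∈ p := hlast hne ▸ List.getLast_mem hne
    by_cases hvσ : v ∈ (st σ).red
    · exact ⟨v, hDred v hvσ, hvp⟩
    by_cases hsrc : G.IsSource v
    · have hl : v ∈ (st s).lred := by
        rcases mem_red.1 hred with h | h
        · exact h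
        · exact absurd hsrc (T.dred_ns s v h)
      exact ⟨v, T.src_dom hDred hDload hsrc s hσs hsN hl, hvp⟩
    rcases eq_or_lt_of_le hσs with heq | hσs'
    · exact absurd (by rw [heq]; exact hred) hvσ
    obtain ⟨s', rfl⟩ : ∃ s', s = s' + 1 := ⟨s - 1, by omega⟩
    have hσs2 : σ ≤ s' := by omega
    by_cases hred' : v ∈ (st s').red
    · exact ih s' v p (by omega) hσs2 (by omega) hred' hH hout ⟨hne, hch, hhd⟩ hlast hLE
    have hslen : s' < L.length := by
      by_contra hs
      push_neg at hs
      rw [T.stab (s'+1) (by omega), ← T.stab s' hs] at hred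
      exact hred' hred
    rcases step_red_entry (T.step s' hslen) hred' hred with ⟨hload, -⟩ | ⟨q, hmove, hqv, hnblue⟩
    · exact ⟨v, hDload v s' hslen hσs2 (by omega) hload, hvp⟩
    -- cold pcompute `q v` at time s'
    by_cases hbσ : v ∈ (st σ).blue
    · obtain ⟨j, hj1, hj2, hj3, hj4⟩ :=
        exists_exit (fun j => v ∈ (st j).blue) hbσ hnblue hσs2
      have hjlen : j < L.length := lt_trans hj2 hslen
      obtain ⟨q', hmove', hredj⟩ := step_blue_exit (T.step j hjlen) hj3 hj4
      exact ih j v p (by omega) hj1 (by omega) hredj hH hout ⟨hne, hch, hhd⟩ hlast hLE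
    have hH2 : ∃ u, G.E u v ∧ (u, v) ∉ (st σ).marked := by
      rcases hH with h | h | h | h
      · exact absurd h hsrc
      · exact absurd h hvσ
      · exact absurd h hbσ
      · exact h
    obtain ⟨u₀, hu₀e, hu₀m⟩ := hH2
    -- split the path: p = p' ++ [v] with p' ≠ []
    have hsplit : p.dropLast ++ [v] = p := by
      have h1 := List.dropLast_append_getLast hne
      rw [hlast hne] at h1
      exact h1
    set p' := p.dropLast with hp'
    by_cases hpl : p' = []
    · exfalso
      have hh : p.head hne = v := by
        have h2 : p.head? = some v := by rw [← hsplit, hpl]; rfl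
        have h3 := List.head?_eq_head hne
        rw [h2] at h3
        exact (Option.some_injective _ h3).symm
      exact hsrc (hh ▸ hhd hne)
    have hu' := List.dropLast_append_getLast hpl
    set u := p'.getLast hpl with hu
    have hsplit2 : (p'.dropLast ++ [u]) ++ [v] = p := by rw [hu']; exact hsplit
    have hEuv : G.E u v := by
      have hch2 : List.Chain' G.E (p'.dropLast ++ ([u] ++ [v])) := by
        rw [← List.append_assoc, hsplit2]; exact hch
      have h3 := (List.isChain_append.1 hch2).2.1
      exact List.isChain_pair.1 h3
    have ht' : mt st (u, v) ≤ N := by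
      refine hLE p'.dropLast u v ?_
      rw [← hsplit2, List.append_assoc]
      rfl
    have hσt : σ ≤ mt st (u, v) := by
      by_contra hlt
      push_neg at hlt
      have hdred : v ∈ (st (mt st (u, v) + 1)).dred := by
        obtain ⟨-, -, -, -, -, -, heq2⟩ := T.mt_step hEuv
        rw [heq2]
        exact Finset.mem_insert_self _ _
      have hQ := T.Qmono v (show mt st (u, v) + 1 ≤ σ by omega)
        (Or.inl (mem_red.2 (Or.inr hdred)))
      rcases hQ with (h | h) | h
      · exact hvσ h
      · exact hbσ h
      · obtain ⟨z, hz⟩ := hout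
        have hmz : mt st (v, z) < σ := (T.marked_iff hz σ).1 (h z hz)
        obtain ⟨-, -, hallin, -, -, -, -⟩ := T.mt_step hz
        exact hu₀m (T.marked_mono (le_of_lt hmz) (hallin u₀ hu₀e))
    have hured : u ∈ (st (mt st (u, v))).red := by
      obtain ⟨-, -, -, h4, -, -, -⟩ := T.mt_step hEuv
      exact h4
    have huprev : ∀ w, G.E w u → (w, u) ∈ (st (mt st (u, v))).marked := by
      obtain ⟨-, -, h3, -, -, -, -⟩ := T.mt_step hEuv
      exact h3
    have hHu : G.IsSource u ∨ u ∈ (st σ).red ∨ u ∈ (st σ).blue ∨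
        ∃ w, G.E w u ∧ (w, u) ∉ (st σ).marked := by
      by_cases husrc : G.IsSource u
      · exact Or.inl husrc
      by_cases hurσ : u ∈ (st σ).red
      · exact Or.inr (Or.inl hurσ)
      by_cases hubσ : u ∈ (st σ).blue
      · exact Or.inr (Or.inr (Or.inl hubσ))
      by_cases hallu : ∀ w, G.E w u → (w, u) ∈ (st σ).marked
      · exfalso
        have hMtu : Mt G st u < σ := (T.all_marked_iff husrc σ).1 hallu
        have hudred : u ∈ (st (Mt G st u + 1)).dred := (T.Mt_post husrc).1
        have hQ := T.Qmono u (show Mt G st u + 1 ≤ σ by omega)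
          (Or.inl (mem_red.2 (Or.inr hudred)))
        rcases hQ with (h | h) | h
        · exact hurσ h
        · exact hubσ h
        · have := (T.marked_iff hEuv σ).1 (h v hEuv)
          omega
      · push_neg at hallu
        obtain ⟨w, hw1, hw2⟩ := hallu
        exact Or.inr (Or.inr (Or.inr ⟨w, hw1, hw2⟩))
    -- recurse on the shorter path p'
    have hlen : p'.length + 1 = p.length := by
      rw [hp', List.length_dropLast]
      have : 1 ≤ p.length := Nat.one_le_iff_ne_zero.2 (fun h => hne (List.length_eq_zero_iff.1 h))
      omega
    have hmul : p.length * (N + 2) = p'.length * (N + 2) + (N + 2) := by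
      rw [← hlen]; ring
    have hpath' : IsSourcePath G p' := by
      refine ⟨hpl, ?_, ?_⟩
      · have : p' <+: p := ⟨[v], hsplit⟩
        exact hch.prefix this
      · intro h
        have h2 : p.head? = p'.head? := by
          rw [← hsplit]
          obtain ⟨c, cs, hccs⟩ := List.exists_cons_of_ne_nil h
          rw [hccs]
          rfl
        have h3 := List.head?_eq_head hne
        have h4 := List.head?_eq_head h
        rw [h2, h4] at h3
        have h5 : p'.head h = p.head hne := Option.some_injective _ h3
        rw [h5]
        exact hhd hne
    have hlast' : ∀ h : p' ≠ [], p'.getLast h = u := fun h => rfl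
    have hLE' : ∀ (q2 : List V) a b, p' = q2 ++ [a, b] → mt st (a, b) ≤ N := by
      intro q2 a b hq
      have hbu : b = u := by
        have h1 : p'.getLast? = some b := by
          have h2 : p' = (q2 ++ [a]) ++ [b] := by rw [hq]; simp
          rw [h2, List.getLast?_concat]
        have h3 := List.getLast?_eq_getLast hpl
        rw [h1] at h3
        exact (Option.some_injective _ h3)
      subst hbu
      have hEau : G.E a u := by
        have hch3 : List.Chain' G.E (q2 ++ [a, u]) := by rw [← hq]; exact hch.prefix ⟨[v], hsplit⟩
        have h3 := (List.isChain_append.1 hch3).2.1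
        exact List.isChain_pair.1 h3
      have h4 : (a, u) ∈ (st (mt st (u, v))).marked := huprev a hEau
      have h5 := (T.marked_iff hEau _).1 h4
      omega
    obtain ⟨d, hd1, hd2⟩ := ih (mt st (u, v)) u p' (by omega) hσt (by omega) hured hHu
      ⟨v, hEuv⟩ hpath' hlast' hLE'
    refine ⟨d, hd1, ?_⟩
    rw [← hsplit]
    exact List.mem_append_left _ hd2

end S11
namespace S11
set_option linter.unusedSectionVars false
set_option linter.unusedVariables false

variable {V : Type} [Fintype V] [DecidableEq V]
variable {G : DirGraph V} {r : ℕ} {L : List (PRBPMove V)} {st : ℕ → PRBPState V}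

lemma Trace.cost_pos (T : Trace G r L st) {a b : V} (hab : G.E a b) :
    1 ≤ PRBPCost L := by
  by_contra hC
  push_neg at hC
  have hempty : ∀ j, (st j).lred = ∅ ∧ (st j).dred = ∅ := by
    refine T.inv (fun s => s.lred = ∅ ∧ s.dred = ∅) ?_ ?_
    · rw [T.h0]; exact ⟨rfl, rfl⟩
    · intro j hj hp
      have hcost : (L.get ⟨j, hj⟩).ioCost ≤ 0 := by
        have h1 := io_succ L hj
        have h2 := io_le L (j+1)
        omega
      have hstep := T.step j hj
      cases hmv : L.get ⟨j, hj⟩ with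
      | save x =>
        rw [hmv] at hstep
        obtain ⟨hx, -⟩ := hstep
        rw [hp.2] at hx
        simp at hx
      | load x => rw [hmv] at hcost; simp [PRBPMove.ioCost] at hcost
      | pcompute x y =>
        rw [hmv] at hstep
        obtain ⟨-, -, -, hx, -, -, -⟩ := hstep
        rw [mem_red, hp.1, hp.2] at hx
        simp at hx
      | delete x =>
        rw [hmv] at hstep
        rcases hstep with ⟨hx, heq⟩ | ⟨hx, -, heq⟩
        · rw [heq, hp.1]
          constructor
          · simp
          · exact hp.2
        · rw [heq, hp.2]
          constructor
          · exact hp.1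
          · simp
  obtain ⟨-, -, -, hared, -, -, -⟩ := T.mt_step hab
  rw [mem_red, (hempty _).1, (hempty _).2] at hared
  simp at hared

lemma ncard_io_bound (L : List (PRBPMove V)) {r i : ℕ} (hr : 1 ≤ r)
    (hC : PRBPCost L ≤ r * ((PRBPCost L + r - 1) / r))
    (W : Set V) (g : V → ℕ)
    (hg : ∀ x ∈ W, ∃ hj : g x < L.length, seg L r (g x) = i ∧
      (L.get ⟨g x, hj⟩ = .load x ∨ L.get ⟨g x, hj⟩ = .save x)) :
    W.ncard ≤ r := by
  classical
  have hrange : ∀ x ∈ W, io L (g x) ∈ Set.Ico (i * r) (i * r + r) := by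
    intro x hx
    obtain ⟨hj, hseg, hmv⟩ := hg x hx
    have hio1 : i * r ≤ io L (g x) := io_ge_of_seg L hr hseg
    have hcost1 : (L.get ⟨g x, hj⟩).ioCost = 1 := by
      rcases hmv with h | h <;> rw [h] <;> rfl
    have hio2 : io L (g x) + 1 ≤ PRBPCost L := by
      have h1 := io_succ_io L hj hcost1
      have h2 := io_le L (g x + 1)
      omega
    refine ⟨hio1, ?_⟩
    rcases Nat.lt_or_ge (io L (g x)) ((i+1) * r) with h | h
    · have he : (i+1) * r = i * r + r := by ring
      omega
    · exfalso
      have hdiv : i + 1 ≤ io L (g x) / r := (Nat.le_div_iff_mul_le hr).2 h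
      have hmin : min (io L (g x) / r) ((PRBPCost L + r - 1) / r - 1) = i := hseg
      have hik : (PRBPCost L + r - 1) / r - 1 = i := by
        rcases min_choice (io L (g x) / r) ((PRBPCost L + r - 1) / r - 1) with h1 | h1 <;>
          rw [hmin] at h1 <;> omega
      rcases Nat.eq_zero_or_pos ((PRBPCost L + r - 1) / r) with hk0 | hk1
      · rw [hk0, Nat.mul_zero] at hC
        omega
      · have hik2 : i + 1 = (PRBPCost L + r - 1) / r := by omega
        have h6 : (i + 1) * r = r * ((PRBPCost L + r - 1) / r) := by
          rw [hik2, Nat.mul_comm]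
        omega
  have hinj : Set.InjOn (fun x => io L (g x)) W := by
    have key : ∀ x ∈ W, ∀ y ∈ W, g x < g y → io L (g x) = io L (g y) → False := by
      intro x hx y hy h hxy
      obtain ⟨hjx, hsx, hmx⟩ := hg x hx
      have hcx : (L.get ⟨g x, hjx⟩).ioCost = 1 := by
        rcases hmx with h' | h' <;> rw [h'] <;> rfl
      have h1 := io_succ_io L hjx hcx
      have h2 := io_mono L (show g x + 1 ≤ g y from h)
      omega
    intro x hx y hy hxy
    obtain ⟨hjx, hsx, hmx⟩ := hg x hx
    obtain ⟨hjy, hsy, hmy⟩ := hg y hy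
    simp only at hxy
    rcases Nat.lt_trichotomy (g x) (g y) with h | h | h
    · exact absurd hxy (fun hh => key x hx y hy h hh)
    · have hfe : (⟨g x, hjx⟩ : Fin L.length) = ⟨g y, hjy⟩ := Fin.ext h
      have hget : L.get ⟨g x, hjx⟩ = L.get ⟨g y, hjy⟩ := by rw [hfe]
      rcases hmx with h' | h' <;> rcases hmy with h'' | h'' <;>
          rw [h', h''] at hget <;> simp at hget <;> exact hget
    · exact absurd hxy.symm (fun hh => key y hy x hx h hh)
  have hfin : (Set.Ico (i * r) (i * r + r)).Finite := Set.finite_Ico _ _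
  have hle := Set.ncard_le_ncard_of_injOn _ hrange hinj hfin
  refine le_trans hle ?_
  rw [← Finset.coe_Ico, Set.ncard_coe_finset, Nat.card_Ico]
  omega

end S11
namespace S11
set_option linter.unusedSectionVars false
set_option linter.unusedVariables false
open scoped Classical

variable {V : Type} [Fintype V] [DecidableEq V]

theorem construction (G : DirGraph V) (hiso : G.NoIsolated)
    {r : ℕ} (hr : 1 ≤ r) (L : List (PRBPMove V)) (hvalid : PRBPValid G r L) :
    ∃ P : Fin ((PRBPCost L + r - 1) / r) → Set V,
      IsSDomPartition G (2 * r) ((PRBPCost L + r - 1) / r) P := by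
  classical
  obtain ⟨tfin, hreach, hsinks, hmarked⟩ := hvalid
  obtain ⟨st, h0, hstepf, hfin⟩ := exists_trace hreach
  have hfin' : st L.length = tfin := hfin L.length (le_refl _)
  have T : Trace G r L st :=
    ⟨h0, hstepf, fun j hj => by rw [hfin j hj, hfin'],
      fun v hv => by rw [hfin']; exact hsinks v hv,
      fun u v huv => by rw [hfin']; exact hmarked u v huv⟩
  set C := PRBPCost L with hCdef
  set k := (C + r - 1) / r with hkdef
  obtain ⟨harith1, harith2, harith3⟩ := arith r C k hr hkdef
  set ct : V → ℕ := fun v =>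
    if G.IsSource v then fl st v
    else if (∀ z, ¬ G.E v z) then bt G st v else Mt G st v with hct
  set cls : V → ℕ := fun v => seg L r (ct v) with hclsdef
  refine ⟨fun i => {v | cls v = i.val}, ?_, ?_, ?_⟩
  · -- membership
    intro v
    have hCpos : 1 ≤ C := by
      rcases hiso v with ⟨u, hu⟩ | ⟨u, hu⟩
      · exact T.cost_pos hu
      · exact T.cost_pos hu
    have hk1 : 1 ≤ k := (harith3 hCpos).1
    have hse : cls v ≤ k - 1 := seg_le L r (ct v)
    have hlt : cls v < k := by omega
    refine ⟨⟨cls v, hlt⟩, rfl, ?_⟩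
    intro j hj
    exact Fin.ext hj.symm
  · -- ordering
    intro i j hij u v hu hv hEuv
    have hctlt : ct u < ct v := by
      have hns : ¬ G.IsSource v := fun h => h u hEuv
      have tle : mt st (u, v) ≤ Mt G st v := T.mt_le_Mt hEuv
      have hctu : ct u < mt st (u, v) := by
        by_cases husrc : G.IsSource u
        · have h1 := T.fl_lt_of_lred (T.src_lred_at_mt husrc hEuv)
          simp only [hct, if_pos husrc]
          exact h1
        · have hnsk : ¬ (∀ z, ¬ G.E u z) := fun h => h v hEuv
          simp only [hct, if_neg husrc, if_neg hnsk]
          obtain ⟨-, -, hallin, -, -, -, -⟩ := T.mt_step hEuv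
          exact (T.all_marked_iff husrc _).1 hallin
      have hctv : mt st (u, v) ≤ ct v := by
        by_cases hsink : ∀ z, ¬ G.E v z
        · simp only [hct, if_neg hns, if_pos hsink]
          exact le_trans tle (le_of_lt (T.bt_gt hns hsink))
        · simp only [hct, if_neg hns, if_neg hsink]
          exact tle
      omega
    have hcle : cls u ≤ cls v := seg_mono L r (le_of_lt hctlt)
    rw [Set.mem_setOf_eq] at hu hv
    have hval : (j : ℕ) < (i : ℕ) := hij
    omega
  · -- dominators
    intro i
    by_cases hV : Nonempty V
    case neg =>
      refine ⟨∅, by simp, ?_⟩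
      intro p hp hne hmem
      exfalso
      obtain ⟨c, cs, rfl⟩ := List.exists_cons_of_ne_nil hne
      exact hV ⟨c⟩
    obtain ⟨v0⟩ := hV
    have hCpos : 1 ≤ C := by
      rcases hiso v0 with ⟨u, hu⟩ | ⟨u, hu⟩
      · exact T.cost_pos hu
      · exact T.cost_pos hu
    obtain ⟨hk1, hk2⟩ := harith3 hCpos
    have hik : i.val ≤ k - 1 := by have := i.isLt; omega
    set σ := start L r i.val with hσdef
    set loadedD : Set V := {x | ∃ j, ∃ hj : j < L.length,
        seg L r j = i.val ∧ L.get ⟨j, hj⟩ = .load x} with hloadedD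
    set sinksav : Set V := {x | ¬ G.IsSource x ∧ (∀ z, ¬ G.E x z) ∧
        seg L r (bt G st x) = i.val} with hsinksav
    refine ⟨↑(st σ).red ∪ (loadedD ∪ sinksav), ?_, ?_⟩
    · -- cardinality
      have h1 : (↑(st σ).red : Set V).ncard ≤ r := by
        rw [Set.ncard_coe_finset]; exact T.red_card σ
      have h2 : (loadedD ∪ sinksav).ncard ≤ r := by
        refine ncard_io_bound (i := i.val) L hr harith1 _ (fun x => if x ∈ loadedD then
            sInf {j | ∃ hj : j < L.length, seg L r j = i.val ∧ L.get ⟨j, hj⟩ = .load x}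
          else bt G st x) ?_
        intro x hx
        by_cases hxl : x ∈ loadedD
        · have hnex : {j | ∃ hj : j < L.length, seg L r j = i.val ∧
              L.get ⟨j, hj⟩ = .load x}.Nonempty := hxl
          have hmemx := Nat.sInf_mem hnex
          obtain ⟨hj, hseg, hmv⟩ := hmemx
          simp only [if_pos hxl]
          exact ⟨hj, hseg, Or.inl hmv⟩
        · have hxs : x ∈ sinksav := hx.resolve_left hxl
          obtain ⟨hns, hsink, hseg⟩ := hxs
          simp only [if_neg hxl]
          exact ⟨T.bt_lt_len hns hsink, hseg, Or.inr (T.bt_move hns hsink)⟩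
      calc (↑(st σ).red ∪ (loadedD ∪ sinksav)).ncard
          ≤ (↑(st σ).red : Set V).ncard + (loadedD ∪ sinksav).ncard :=
            Set.ncard_union_le _ _
        _ ≤ r + r := add_le_add h1 h2
        _ = 2 * r := by ring
    · -- domination
      intro p hp hne hmem
      rw [Set.mem_setOf_eq] at hmem
      set w := p.getLast hne with hw
      have hwp : w ∈ p := List.getLast_mem hne
      obtain ⟨hne', hch, hhd⟩ := hp
      by_cases hsrc : G.IsSource w
      · have hz : ∃ z, G.E w z := by
          rcases hiso w with ⟨u, hu⟩ | ⟨z, hz⟩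
          · exact absurd hu (hsrc u)
          · exact ⟨z, hz⟩
        obtain ⟨z, hz⟩ := hz
        have hseg : seg L r (fl st w) = i.val := by
          have he : cls w = seg L r (fl st w) := by
            simp only [hclsdef, hct, if_pos hsrc]
          rw [← he]; exact hmem
        exact ⟨w, Or.inr (Or.inl ⟨fl st w, T.fl_lt_len hsrc hz, hseg, T.fl_move hsrc hz⟩),
          hwp⟩
      by_cases hsinkP : ∀ z, ¬ G.E w z
      · have hseg : seg L r (bt G st w) = i.val := by
          have he : cls w = seg L r (bt G st w) := by
            simp only [hclsdef, hct, if_neg hsrc, if_pos hsinkP]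
          rw [← he]; exact hmem
        exact ⟨w, Or.inr (Or.inr ⟨hsrc, hsinkP, hseg⟩), hwp⟩
      have hzex : ∃ z, G.E w z := by
        by_contra hc
        push_neg at hc
        exact hsinkP hc
      have hsegN : seg L r (Mt G st w) = i.val := by
        have he : cls w = seg L r (Mt G st w) := by
          simp only [hclsdef, hct, if_neg hsrc, if_neg hsinkP]
        rw [← he]; exact hmem
      have hioN : i.val * r ≤ io L (Mt G st w) := io_ge_of_seg L hr hsegN
      have hσN : σ ≤ Mt G st w := start_le_of_le L hioN
      have hredw : w ∈ (st (Mt G st w + 1)).red := mem_red.2 (Or.inr (T.Mt_post hsrc).1)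
      have hHw : ∃ u, G.E u w ∧ (u, w) ∉ (st σ).marked := by
        by_contra hc
        push_neg at hc
        have := (T.all_marked_iff hsrc σ).1 hc
        omega
      have hLE : ∀ (q : List V) a b, p = q ++ [a, b] → mt st (a, b) ≤ Mt G st w := by
        intro q a b hq
        have hbw : b = w := by
          have h1 : p.getLast? = some b := by
            have h2 : q ++ [a, b] = (q ++ [a]) ++ [b] := by simp
            rw [hq, h2, List.getLast?_concat]
          have h3 := List.getLast?_eq_getLast hne
          rw [h1] at h3
          exact Option.some_injective _ h3
        subst hbw
        have hEaw : G.E a w := by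
          have hch3 : List.Chain' G.E (q ++ [a, w]) := by rw [← hq]; exact hch
          exact List.isChain_pair.1 (List.isChain_append.1 hch3).2.1
        exact T.mt_le_Mt hEaw
      refine T.dom_main (σ := σ) (N := Mt G st w)
        (D := ↑(st σ).red ∪ (loadedD ∪ sinksav)) ?_ ?_
        (p.length * (Mt G st w + 2) + (Mt G st w + 1)) (Mt G st w + 1) w p
        (le_refl _) (by omega) (le_refl _) hredw
        (Or.inr (Or.inr (Or.inr hHw))) hzex ⟨hne, hch, hhd⟩ (fun h => rfl) hLE
      · intro x hx
        exact Set.mem_union_left _ (Finset.mem_coe.2 hx)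
      · intro x j hj hσj hjN hmv
        exact Set.mem_union_right _ (Set.mem_union_left _
          ⟨j, hj, seg_between L hr hik hσj hjN hsegN, hmv⟩)

end S11
/-- any valid PRBP pebbling of cost `C` yields a `(2r)`-dominator
partition of the nodes into `k = ⌈C/r⌉` classes (so `r·k ≥ C ≥ r·(k−1)`);
consequently `OPT_PRBP(G,r) ≥ r · (MIN_dom(2r) − 1)`. -/
theorem prbp_gives_dominator_partition {V : Type} [Fintype V] [DecidableEq V]
    (G : DirGraph V) (hacyc : G.Acyclic) (hiso : G.NoIsolated)
    (r : ℕ) (hr : 1 ≤ r) :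
    (∀ (L : List (PRBPMove V)) (C : ℕ), PRBPValid G r L → PRBPCost L = C →
      ∃ P : Fin ((C + r - 1) / r) → Set V,
        IsSDomPartition G (2 * r) ((C + r - 1) / r) P ∧
        C ≤ r * ((C + r - 1) / r) ∧ r * ((C + r - 1) / r - 1) ≤ C) ∧
    ((r * (minDomPartition G (2 * r) - 1) : ℕ) : ℕ∞) ≤ optPRBP G r := by
  constructor
  · intro L C hvalid hcost
    subst hcost
    obtain ⟨P, hP⟩ := S11.construction G hiso hr L hvalid
    obtain ⟨h1, h2, -⟩ := S11.arith r (PRBPCost L) ((PRBPCost L + r - 1) / r) hr rfl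
    exact ⟨P, hP, h1, h2⟩
  · refine le_sInf ?_
    rintro b ⟨L, hL, rfl⟩
    obtain ⟨P, hP⟩ := S11.construction G hiso hr L hL
    have hmin : minDomPartition G (2 * r) ≤ (PRBPCost L + r - 1) / r :=
      Nat.sInf_le ⟨P, hP⟩
    obtain ⟨-, h2, -⟩ := S11.arith r (PRBPCost L) ((PRBPCost L + r - 1) / r) hr rfl
    have hfinal : r * (minDomPartition G (2 * r) - 1) ≤ PRBPCost L :=
      le_trans (Nat.mul_le_mul_left r (by omega)) h2
    exact Nat.cast_le.2 hfinal
end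

section
/- There exists a DAG G on n nodes and a capacity r = 3 such that OPT_PRBP(G, r) = O(1) (equal to the trivial cost of 8), while every S-partition of G in the sense of Hong and Kung with S = 2r = 6 has Θ(n) classes; hence the Hong–Kung S-partition lower bound r·(MIN_part(2r) − 1) does not apply to PRBP. -/
open scoped Classical

variable {V : Type} [Fintype V] [DecidableEq V]

namespace SPFail

def N (m : ℕ) : ℕ := 7*m+8

def Gm (m : ℕ) : DirGraph (Fin (N m)) where
  E a b := (a.val < 7 ∧ 7 ≤ b.val ∧ b.val < 7*m+7 ∧ (b.val - 7)/m = a.val)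
        ∨ (7 ≤ a.val ∧ a.val < 7*m+7 ∧ b.val = 7*m+7)

/-- the source nodes -/
def src (m : ℕ) (i : ℕ) (hi : i < 7) : Fin (N m) := ⟨i, by simp only [N]; omega⟩
/-- the H nodes, j < 7*m -/
def hnd (m : ℕ) (j : ℕ) (hj : j < 7*m) : Fin (N m) := ⟨7+j, by simp only [N]; omega⟩
/-- the sink -/
def snk (m : ℕ) : Fin (N m) := ⟨7*m+7, by simp only [N]; omega⟩

variable {m : ℕ} (hm : 0 < m)

lemma edge_lt {a b : Fin (N m)} (h : (Gm m).E a b) : a.val < b.val := by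
  rcases h with ⟨h1,h2,_⟩|⟨h1,h2,h3⟩ <;> omega

lemma acyclic : (Gm m).Acyclic := by
  intro v hv
  have : v.val < v.val := by
    have mono : ∀ a b : Fin (N m), Relation.TransGen (Gm m).E a b → a.val < b.val := by
      intro a b h
      induction h with
      | single h => exact edge_lt h
      | tail _ h ih => exact lt_trans ih (edge_lt h)
    exact mono v v hv
  omega

include hm

lemma div_lt7 {j : ℕ} (hj : j < 7*m) : j/m < 7 :=
  (Nat.div_lt_iff_lt_mul hm).2 (by omega)

lemma edge_src_hnd {j : ℕ} (hj : j < 7*m) :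
    (Gm m).E (src m (j/m) (div_lt7 hm hj)) (hnd m j hj) :=
  Or.inl ⟨div_lt7 hm hj, by simp [hnd], by simp [hnd]; omega, by simp [hnd, src]⟩

lemma edge_hnd_snk {j : ℕ} (hj : j < 7*m) :
    (Gm m).E (hnd m j hj) (snk m) :=
  Or.inr ⟨by simp [hnd], by simp [hnd]; omega, by simp [snk]⟩

lemma isSource_iff (a : Fin (N m)) : (Gm m).IsSource a ↔ a.val < 7 := by
  constructor
  · intro hs
    by_contra h
    push_neg at h
    have hN : a.val < 7*m+8 := a.isLt
    rcases lt_or_ge a.val (7*m+7) with h2 | h2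
    · have hlt : (a.val-7)/m < 7 := div_lt7 hm (by omega)
      exact hs ⟨(a.val-7)/m, by simp only [N]; omega⟩ (Or.inl ⟨hlt, by omega, by omega, rfl⟩)
    · have ha : a.val = 7*m+7 := by omega
      exact hs ⟨7, by simp only [N]; omega⟩ (Or.inr ⟨le_refl 7, show 7 < 7*m+7 by omega, ha⟩)
  · intro h u hu
    rcases hu with ⟨_,h2,_⟩|⟨_,_,h3⟩ <;> omega

lemma isSink_iff (a : Fin (N m)) : (Gm m).IsSink a ↔ a.val = 7*m+7 := by
  constructor
  · intro hs
    by_contra h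
    have hN : a.val < 7*m+8 := a.isLt
    rcases lt_or_ge a.val 7 with h2 | h2
    · have hj : 7 + a.val*m < 7*m+7 := by
        have := Nat.mul_le_mul_right m (show a.val ≤ 6 by omega); omega
      refine hs ⟨7 + a.val*m, by simp only [N]; omega⟩
        (Or.inl ⟨h2, show 7 ≤ 7 + a.val*m by omega, show 7 + a.val*m < 7*m+7 by omega, ?_⟩)
      show (7 + a.val*m - 7)/m = a.val
      rw [Nat.add_sub_cancel_left]
      exact Nat.mul_div_cancel _ hm
    · exact hs ⟨7*m+7, by simp only [N]; omega⟩ (Or.inr ⟨by omega, by omega, show (7*m+7:ℕ) = 7*m+7 from rfl⟩)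
  · intro h u hu
    rcases hu with ⟨h1,_⟩|⟨_,h2,_⟩ <;> omega

end SPFail
namespace SPFail
set_option linter.unusedSectionVars false

section Generic
variable {V : Type} [Fintype V] [DecidableEq V] {G : DirGraph V} {r : ℕ}

lemma reaches_append {s t u : PRBPState V} {L₁ L₂ : List (PRBPMove V)}
    (h₁ : PRBPReaches G r s L₁ t) (h₂ : PRBPReaches G r t L₂ u) :
    PRBPReaches G r s (L₁ ++ L₂) u := by
  induction h₁ with
  | nil => simpa using h₂
  | cons hs _ ih => exact PRBPReaches.cons hs (ih h₂)

lemma cost_append {V : Type} (L₁ L₂ : List (PRBPMove V)) :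
    PRBPCost (L₁ ++ L₂) = PRBPCost L₁ + PRBPCost L₂ := by
  simp [PRBPCost]

lemma cost_bind {V α : Type} (l : List α) (f : α → List (PRBPMove V)) :
    PRBPCost (l.flatMap f) = (l.map (fun a => PRBPCost (f a))).sum := by
  induction l with
  | nil => simp [PRBPCost]
  | cons a l ih => simp [List.flatMap_cons, cost_append, ih]

/-- if a source `u` is red or has a marked out-edge after `L`, then
either this held before, or `L` contains a `load u`. -/
lemma source_load_mem {s t : PRBPState V} {L : List (PRBPMove V)}
    (h : PRBPReaches G r s L t) (u : V) (hu : G.IsSource u) :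
    (u ∈ t.red ∨ ∃ b, (u, b) ∈ t.marked) →
    ((u ∈ s.red ∨ ∃ b, (u, b) ∈ s.marked) ∨ PRBPMove.load u ∈ L) := by
  induction h with
  | nil => exact fun h => Or.inl h
  | @cons s t w mv L hstep _ ih =>
    intro hend
    have key : (u ∈ t.red ∨ ∃ b, (u, b) ∈ t.marked) →
        (u ∈ s.red ∨ ∃ b, (u, b) ∈ s.marked) ∨ mv = PRBPMove.load u := by
      cases mv with
      | save x =>
        obtain ⟨hx, rfl⟩ := hstep
        rintro (hr | ⟨b, hb⟩)
        · refine Or.inl (Or.inl ?_)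
          simp only [PRBPState.red, Finset.mem_union, Finset.mem_insert,
            Finset.mem_erase] at hr ⊢
          rcases hr with (rfl | h) | h
          · exact Or.inr hx
          · exact Or.inl h
          · exact Or.inr h.2
        · exact Or.inl (Or.inr ⟨b, hb⟩)
      | load x =>
        obtain ⟨hx, _, rfl⟩ := hstep
        rintro (hr | ⟨b, hb⟩)
        · simp only [PRBPState.red, Finset.mem_union, Finset.mem_insert] at hr
          rcases hr with (rfl | h) | h
          · exact Or.inr rfl
          · exact Or.inl (Or.inl (by simp [PRBPState.red, h]))
          · exact Or.inl (Or.inl (by simp [PRBPState.red, h]))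
        · exact Or.inl (Or.inr ⟨b, hb⟩)
      | pcompute a b =>
        obtain ⟨hE, _, _, ha, _, _, rfl⟩ := hstep
        rintro (hr | ⟨c, hc⟩)
        · simp only [PRBPState.red, Finset.mem_union, Finset.mem_insert,
            Finset.mem_erase] at hr
          rcases hr with h | (rfl | h)
          · exact Or.inl (Or.inl (by simp [PRBPState.red, h.2]))
          · exact absurd hE (hu a)
          · exact Or.inl (Or.inl (by simp [PRBPState.red, h]))
        · simp only [Finset.mem_insert] at hc
          rcases hc with h | h
          · have : u = a := by rw [Prod.ext_iff] at h; exact h.1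
            subst this; exact Or.inl (Or.inl ha)
          · exact Or.inl (Or.inr ⟨c, h⟩)
      | delete x =>
        rcases hstep with ⟨hx, rfl⟩ | ⟨hx, _, rfl⟩ <;>
        · rintro (hr | ⟨c, hc⟩)
          · refine Or.inl (Or.inl ?_)
            simp only [PRBPState.red, Finset.mem_union, Finset.mem_erase] at hr ⊢
            tauto
          · exact Or.inl (Or.inr ⟨c, hc⟩)
    rcases ih hend with h | h
    · rcases key h with h' | h'
      · exact Or.inl h'
      · exact Or.inr (by simp [h'])
    · exact Or.inr (List.mem_cons_of_mem _ h)

lemma blue_save_mem {s t : PRBPState V} {L : List (PRBPMove V)}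
    (h : PRBPReaches G r s L t) (v : V) :
    v ∈ t.blue → v ∈ s.blue ∨ ∃ w, PRBPMove.save w ∈ L := by
  induction h with
  | nil => exact fun h => Or.inl h
  | @cons s t w mv L hstep _ ih =>
    intro hend
    have key : v ∈ t.blue → v ∈ s.blue ∨ ∃ x, mv = PRBPMove.save x := by
      cases mv with
      | save x => obtain ⟨hx, rfl⟩ := hstep; exact fun _ => Or.inr ⟨x, rfl⟩
      | load x => obtain ⟨_, _, rfl⟩ := hstep; exact fun h => Or.inl h
      | pcompute a b =>
        obtain ⟨_, _, _, _, _, _, rfl⟩ := hstep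
        intro h
        exact Or.inl (Finset.mem_of_mem_erase h)
      | delete x =>
        rcases hstep with ⟨hx, rfl⟩ | ⟨hx, _, rfl⟩ <;> exact fun h => Or.inl h
    rcases ih hend with h | ⟨x, hx⟩
    · rcases key h with h' | ⟨x, hx⟩
      · exact Or.inl h'
      · exact Or.inr ⟨x, by simp [hx]⟩
    · exact Or.inr ⟨x, List.mem_cons_of_mem _ hx⟩

lemma filter_length_le_cost (L : List (PRBPMove V)) :
    (L.filter (fun mv => decide (PRBPMove.ioCost mv = 1))).length ≤ PRBPCost L := by
  induction L with
  | nil => simp [PRBPCost]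
  | cons a l ih =>
    simp only [PRBPCost, List.map_cons, List.sum_cons] at ih ⊢
    rw [List.filter_cons]
    by_cases h : PRBPMove.ioCost a = 1
    · have h0 : a.ioCost = 1 := h
      simp only [h, decide_true, if_true, List.length_cons]
      omega
    · have h0 : a.ioCost = 0 := by cases a <;> simp [PRBPMove.ioCost] at h ⊢
      simp only [h, decide_false, Bool.false_eq_true, if_false]
      omega

end Generic

end SPFail
namespace SPFail
set_option linter.unusedSectionVars false

def nd (m x : ℕ) : Fin (N m) := ⟨x % N m, Nat.mod_lt _ (by simp only [N]; omega)⟩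

lemma nd_val {m x : ℕ} (hx : x < N m) : (nd m x).val = x := Nat.mod_eq_of_lt hx

noncomputable def blue0 (m : ℕ) : Finset (Fin (N m)) :=
  Finset.univ.filter (fun v => (Gm m).IsSource v)

noncomputable def markedUpTo (m p : ℕ) : Finset (Fin (N m) × Fin (N m)) :=
  (Finset.range p).biUnion
    (fun j => {(nd m (j/m), nd m (7+j)), (nd m (7+j), nd m (7*m+7))})

noncomputable def dredAt (m p : ℕ) : Finset (Fin (N m)) :=
  if p = 0 then ∅ else {nd m (7*m+7)}

def trip (m g j : ℕ) : List (PRBPMove (Fin (N m))) :=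
  [.pcompute (nd m g) (nd m (7+j)), .pcompute (nd m (7+j)) (nd m (7*m+7)),
   .delete (nd m (7+j))]

def innerList (m i t : ℕ) : List (PRBPMove (Fin (N m))) :=
  (List.range (m - t)).flatMap (fun s => trip m i (i*m+t+s))

def block (m i : ℕ) : List (PRBPMove (Fin (N m))) :=
  .load (nd m i) :: (innerList m i 0 ++ [.delete (nd m i)])

def outerList (m i : ℕ) : List (PRBPMove (Fin (N m))) :=
  (List.range (7 - i)).flatMap (fun s => block m (i+s))

def fullList (m : ℕ) : List (PRBPMove (Fin (N m))) :=
  outerList m 0 ++ [.save (nd m (7*m+7))]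

variable {m : ℕ}

lemma N_big : 8 ≤ N m := by simp only [N]; omega

lemma mem_blue0 {x : Fin (N m)} (hm : 0 < m) : x ∈ blue0 m ↔ x.val < 7 := by
  rw [blue0, Finset.mem_filter]
  simp [isSource_iff hm]

lemma mem_dredAt {x : Fin (N m)} {p : ℕ} (hx : x ∈ dredAt m p) :
    x = nd m (7*m+7) := by
  rw [dredAt] at hx
  split at hx
  · simp at hx
  · simpa using hx

lemma card_dredAt_le (p : ℕ) : (dredAt m p).card ≤ 1 := by
  rw [dredAt]; split <;> simp

lemma dredAt_pos {p : ℕ} (hp : p ≠ 0) : dredAt m p = {nd m (7*m+7)} :=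
  if_neg hp

lemma mem_markedUpTo {p : ℕ} {a b : Fin (N m)} :
    (a, b) ∈ markedUpTo m p ↔ ∃ j < p,
      (a = nd m (j/m) ∧ b = nd m (7+j)) ∨ (a = nd m (7+j) ∧ b = nd m (7*m+7)) := by
  rw [markedUpTo]
  simp only [Finset.mem_biUnion, Finset.mem_range, Finset.mem_insert,
    Finset.mem_singleton, Prod.mk.injEq]

lemma markedUpTo_succ (p : ℕ) :
    markedUpTo m (p+1) = insert (nd m (p/m), nd m (7+p))
      (insert (nd m (7+p), nd m (7*m+7)) (markedUpTo m p)) := by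
  conv_lhs => rw [markedUpTo]
  rw [Finset.range_add_one, Finset.biUnion_insert]
  have : markedUpTo m p = (Finset.range p).biUnion
      (fun j => {(nd m (j/m), nd m (7+j)), (nd m (7+j), nd m (7*m+7))}) := by
    rw [markedUpTo]
  rw [this]
  ext x
  simp only [Finset.mem_union, Finset.mem_insert, Finset.mem_singleton]
  tauto

lemma div_helper (hm : 0 < m) {i t : ℕ} (ht : t < m) : (i*m+t)/m = i := by
  rw [mul_comm, Nat.mul_add_div hm, Nat.div_eq_of_lt ht, add_zero]

lemma markedUpTo_zero : markedUpTo m 0 = ∅ := by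
  rw [markedUpTo]; simp

lemma inner_reaches (hm : 0 < m) {i : ℕ} (hi : i < 7) :
    ∀ t, t ≤ m →
    PRBPReaches (Gm m) 3
      ⟨{nd m i}, dredAt m (i*m+t), blue0 m, markedUpTo m (i*m+t)⟩
      (innerList m i t)
      ⟨{nd m i}, {nd m (7*m+7)}, blue0 m, markedUpTo m (i*m+m)⟩ := by
  suffices H : ∀ d t, t ≤ m → m - t = d →
      PRBPReaches (Gm m) 3
        ⟨{nd m i}, dredAt m (i*m+t), blue0 m, markedUpTo m (i*m+t)⟩
        (innerList m i t)
        ⟨{nd m i}, {nd m (7*m+7)}, blue0 m, markedUpTo m (i*m+m)⟩ by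
    exact fun t ht => H (m - t) t ht rfl
  intro d
  induction d with
  | zero =>
    intro t ht hd
    have htm : t = m := by omega
    subst htm
    rw [show innerList t i t = [] from by rw [innerList]; simp,
      dredAt_pos (show i*t+t ≠ 0 by omega)]
    exact PRBPReaches.nil _
  | succ d ih =>
    intro t ht hd
    have htm : t < m := by omega
    have hjlt : i*m+t < 7*m := by
      have : i*m ≤ 6*m := Nat.mul_le_mul_right m (by omega)
      omega
    set j := i*m+t with hj
    set u := nd m i with hu
    set h := nd m (7+j) with hh
    set v := nd m (7*m+7) with hv
    have huval : u.val = i := nd_val (by simp only [N]; omega)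
    have hhval : h.val = 7+j := nd_val (by simp only [N]; omega)
    have hvval : v.val = 7*m+7 := nd_val (by simp only [N]; omega)
    have hne_hu : h ≠ u := by
      intro he; rw [Fin.ext_iff, hhval, huval] at he; omega
    have hne_hv : h ≠ v := by
      intro he; rw [Fin.ext_iff, hhval, hvval] at he; omega
    have hne_vu : v ≠ u := by
      intro he; rw [Fin.ext_iff, hvval, huval] at he; omega
    have hjdiv : j/m = i := by rw [hj]; exact div_helper hm htm
    have hvblue : v ∉ blue0 m := by
      intro hx; have := (mem_blue0 hm).1 hx; omega
    have hhblue : h ∉ blue0 m := by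
      intro hx; have := (mem_blue0 hm).1 hx; omega
    -- list decomposition
    have hlist : innerList m i t = trip m i j ++ innerList m i (t+1) := by
      rw [innerList, innerList, hd, show m - (t+1) = d from by omega,
        List.range_succ_eq_map]
      simp only [List.flatMap_cons, List.flatMap_map, Function.comp, add_zero]
      congr 1
      apply List.flatMap_congr
      intro s _
      congr 1
      omega
    rw [hlist]
    have e1 : (({u} : Finset (Fin (N m))).erase h).erase v = {u} := by
      rw [Finset.erase_eq_of_notMem (show v ∉ ({u} : Finset (Fin (N m))).erase h from
          fun hx => hne_vu (Finset.mem_singleton.1 (Finset.mem_of_mem_erase hx))),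
        Finset.erase_eq_of_notMem (show h ∉ ({u} : Finset (Fin (N m))) from
          fun hx => hne_hu (Finset.mem_singleton.1 hx))]
    have e2 : (insert v (insert h (dredAt m j))).erase h = {v} := by
      ext x
      simp only [Finset.mem_erase, Finset.mem_insert, Finset.mem_singleton]
      constructor
      · rintro ⟨hxh, rfl | rfl | hx⟩
        · rfl
        · exact absurd rfl hxh
        · exact mem_dredAt hx
      · rintro rfl
        exact ⟨hne_hv.symm, Or.inl rfl⟩
    have e3 : ((blue0 m).erase h).erase v = blue0 m := by
      rw [Finset.erase_eq_of_notMem hhblue, Finset.erase_eq_of_notMem hvblue]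
    have e4 : insert (h, v) (insert (u, h) (markedUpTo m j)) = markedUpTo m (j+1) := by
      rw [markedUpTo_succ, hjdiv]
      exact Finset.insert_comm _ _ _
    have hC : (⟨{u}, {v}, blue0 m, markedUpTo m (j+1)⟩ : PRBPState (Fin (N m))) =
        ⟨(({u} : Finset (Fin (N m))).erase h).erase v,
          (insert v (insert h (dredAt m j))).erase h,
          ((blue0 m).erase h).erase v,
          insert (h, v) (insert (u, h) (markedUpTo m j))⟩ := by
      congr 1
      · exact e1.symm
      · exact e2.symm
      · exact e3.symm
      · exact e4.symm
    have hrest : PRBPReaches (Gm m) 3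
        ⟨{u}, {v}, blue0 m, markedUpTo m (j+1)⟩ (innerList m i (t+1))
        ⟨{u}, {v}, blue0 m, markedUpTo m (i*m+m)⟩ := by
      have H := ih (t+1) (by omega) (by omega)
      rw [dredAt_pos (show i*m+(t+1) ≠ 0 by omega)] at H
      exact H
    refine reaches_append ?_ hrest
    rw [hC, show trip m i j =
      [PRBPMove.pcompute u h, PRBPMove.pcompute h v, PRBPMove.delete h] from rfl]
    refine PRBPReaches.cons
      (t := ⟨({u} : Finset (Fin (N m))).erase h, insert h (dredAt m j),
             (blue0 m).erase h, insert (u, h) (markedUpTo m j)⟩) ?s1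
      (PRBPReaches.cons
        (t := ⟨(({u} : Finset (Fin (N m))).erase h).erase v,
               insert v (insert h (dredAt m j)),
               ((blue0 m).erase h).erase v,
               insert (h, v) (insert (u, h) (markedUpTo m j))⟩) ?s2
        (PRBPReaches.cons
          (t := ⟨(({u} : Finset (Fin (N m))).erase h).erase v,
                 (insert v (insert h (dredAt m j))).erase h,
                 ((blue0 m).erase h).erase v,
                 insert (h, v) (insert (u, h) (markedUpTo m j))⟩) ?s3
          (PRBPReaches.nil _)))
    case s1 =>
      refine ⟨Or.inl ⟨by omega, by omega, by omega, ?_⟩, ?_, ?_, ?_, ?_, ?_, rfl⟩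
      · rw [hhval, huval, Nat.add_sub_cancel_left]
        exact hjdiv
      · intro hmem
        rw [mem_markedUpTo] at hmem
        obtain ⟨j', hj', hcase⟩ := hmem
        rcases hcase with ⟨_, hb⟩ | ⟨_, hb⟩
        · have hv2 := congrArg Fin.val hb
          rw [hhval, nd_val (show 7+j' < N m by simp only [N]; omega)] at hv2
          omega
        · have hv2 := congrArg Fin.val hb
          rw [hhval, nd_val (show 7*m+7 < N m by simp only [N]; omega)] at hv2
          omega
      · intro w hw
        exact absurd hw (((isSource_iff hm u).2 (by omega)) w)
      · exact Finset.mem_union_left _ (Finset.mem_singleton_self u)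
      · refine Or.inr ⟨?_, hhblue⟩
        intro hx
        rcases Finset.mem_union.1 hx with hx | hx
        · exact hne_hu (Finset.mem_singleton.1 hx)
        · exact hne_hv (mem_dredAt hx)
      · show ((({u} : Finset (Fin (N m))).erase h) ∪ insert h (dredAt m j)).card ≤ 3
        have h1 : (({u} : Finset (Fin (N m))).erase h).card ≤ 1 :=
          le_trans (Finset.card_le_card (Finset.erase_subset _ _)) (by simp)
        have h2 : (insert h (dredAt m j)).card ≤ 2 :=
          le_trans (Finset.card_insert_le _ _)
            (by have := card_dredAt_le (m := m) j; omega)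
        exact le_trans (Finset.card_union_le _ _) (by omega)
    case s2 =>
      refine ⟨Or.inr ⟨by omega, by omega, hvval⟩, ?_, ?_, ?_, ?_, ?_, rfl⟩
      · intro hmem
        rcases Finset.mem_insert.1 hmem with he | hmem'
        · exact hne_hv (congrArg Prod.snd he).symm
        · rw [mem_markedUpTo] at hmem'
          obtain ⟨j', hj', hcase⟩ := hmem'
          rcases hcase with ⟨_, hb⟩ | ⟨ha, _⟩
          · have hv2 := congrArg Fin.val hb
            rw [hvval, nd_val (show 7+j' < N m by simp only [N]; omega)] at hv2
            omega
          · have hv2 := congrArg Fin.val ha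
            rw [hhval, nd_val (show 7+j' < N m by simp only [N]; omega)] at hv2
            omega
      · intro w hw
        rcases hw with ⟨_, _, _, hw4⟩ | ⟨_, _, hw3⟩
        · have hwu : w = u := by
            rw [Fin.ext_iff, huval, ← hw4, hhval, Nat.add_sub_cancel_left]
            exact hjdiv
          rw [hwu]
          exact Finset.mem_insert_self _ _
        · exact absurd hw3 (by omega)
      · show h ∈ PRBPState.red
          ⟨({u} : Finset (Fin (N m))).erase h, insert h (dredAt m j),
           (blue0 m).erase h, insert (u, h) (markedUpTo m j)⟩
        exact Finset.mem_union_right _ (Finset.mem_insert_self _ _)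
      · by_cases hj0 : j = 0
        · refine Or.inr ⟨?_, ?_⟩
          · intro hx
            rcases Finset.mem_union.1 hx with hx | hx
            · exact hne_vu (Finset.mem_singleton.1 (Finset.mem_of_mem_erase hx))
            · rcases Finset.mem_insert.1 hx with he | hx
              · exact hne_hv he.symm
              · rw [dredAt, if_pos hj0] at hx
                simp at hx
          · exact fun hx => hvblue (Finset.mem_of_mem_erase hx)
        · refine Or.inl ?_
          refine Finset.mem_union_right _ (Finset.mem_insert_of_mem ?_)
          rw [dredAt_pos hj0]
          exact Finset.mem_singleton_self _
      · show ((((({u} : Finset (Fin (N m))).erase h).erase v))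
            ∪ insert v (insert h (dredAt m j))).card ≤ 3
        have h1 : ((({u} : Finset (Fin (N m))).erase h).erase v).card ≤ 1 :=
          le_trans (Finset.card_le_card (Finset.erase_subset _ _))
            (le_trans (Finset.card_le_card (Finset.erase_subset _ _)) (by simp))
        have h2 : (insert v (insert h (dredAt m j))).card ≤ 2 := by
          by_cases hj0 : j = 0
          · rw [dredAt, if_pos hj0]
            have c1 := Finset.card_insert_le h (∅ : Finset (Fin (N m)))
            have c2 := Finset.card_insert_le v (insert h (∅ : Finset (Fin (N m))))
            simp only [Finset.card_empty] at c1
            omega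
          · rw [dredAt_pos hj0, Finset.insert_comm,
              show insert v ({nd m (7*m+7)} : Finset (Fin (N m))) = {nd m (7*m+7)} from
                Finset.insert_eq_self.2 (Finset.mem_singleton.2 hv)]
            exact le_trans (Finset.card_insert_le _ _) (by simp)
        exact le_trans (Finset.card_union_le _ _) (by omega)
    case s3 =>
      refine Or.inr ⟨?_, ?_, rfl⟩
      · exact Finset.mem_insert_of_mem (Finset.mem_insert_self _ _)
      · intro w hw
        rcases hw with ⟨hw1, _, _, _⟩ | ⟨_, _, hw3⟩
        · exact absurd hw1 (by omega)
        · have hwv : w = v := by rw [Fin.ext_iff, hvval]; exact hw3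
          rw [hwv]
          exact Finset.mem_insert_self _ _

end SPFail
namespace SPFail
set_option linter.unusedSectionVars false

variable {m : ℕ}

lemma outer_reaches (hm : 0 < m) :
    ∀ i, i ≤ 7 →
    PRBPReaches (Gm m) 3
      ⟨∅, dredAt m (i*m), blue0 m, markedUpTo m (i*m)⟩
      (outerList m i)
      ⟨∅, {nd m (7*m+7)}, blue0 m, markedUpTo m (7*m)⟩ := by
  suffices H : ∀ d i, i ≤ 7 → 7 - i = d →
      PRBPReaches (Gm m) 3
        ⟨∅, dredAt m (i*m), blue0 m, markedUpTo m (i*m)⟩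
        (outerList m i)
        ⟨∅, {nd m (7*m+7)}, blue0 m, markedUpTo m (7*m)⟩ by
    exact fun i hi => H (7 - i) i hi rfl
  intro d
  induction d with
  | zero =>
    intro i hi hd
    have h7 : i = 7 := by omega
    subst h7
    rw [show outerList m 7 = [] from by rw [outerList]; simp,
      dredAt_pos (show 7*m ≠ 0 by omega)]
    exact PRBPReaches.nil _
  | succ d ih =>
    intro i hi hd
    have hi7 : i < 7 := by omega
    have hlist : outerList m i = block m i ++ outerList m (i+1) := by
      rw [outerList, outerList, hd, show 7 - (i+1) = d from by omega,
        List.range_succ_eq_map]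
      simp only [List.flatMap_cons, List.flatMap_map, Function.comp, add_zero]
      congr 1
      apply List.flatMap_congr
      intro s _
      congr 1
      omega
    rw [hlist]
    refine reaches_append ?_ (ih (i+1) (by omega) (by omega))
    set u := nd m i with hu
    have huval : u.val = i := nd_val (by simp only [N]; omega)
    rw [show block m i =
      PRBPMove.load u :: (innerList m i 0 ++ [PRBPMove.delete u]) from rfl]
    refine PRBPReaches.cons
      (t := ⟨insert u ∅, dredAt m (i*m), blue0 m, markedUpTo m (i*m)⟩) ?_ ?_
    · refine ⟨(mem_blue0 hm).2 (by omega), ?_, rfl⟩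
      show (insert u ∅ ∪ dredAt m (i*m)).card ≤ 3
      have hc := card_dredAt_le (m := m) (i*m)
      have h1 := Finset.card_insert_le u (∅ : Finset (Fin (N m)))
      simp only [Finset.card_empty] at h1
      exact le_trans (Finset.card_union_le _ _) (by omega)
    · have hins : insert u (∅ : Finset (Fin (N m))) = {u} := by ext x; simp
      rw [show (⟨insert u ∅, dredAt m (i*m), blue0 m, markedUpTo m (i*m)⟩ :
          PRBPState (Fin (N m))) =
          ⟨{u}, dredAt m (i*m+0), blue0 m, markedUpTo m (i*m+0)⟩ from by
        rw [hins]
        rfl]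
      refine reaches_append (inner_reaches hm hi7 0 (by omega)) ?_
      refine PRBPReaches.cons
        (t := ⟨({u} : Finset (Fin (N m))).erase u, {nd m (7*m+7)}, blue0 m,
               markedUpTo m (i*m+m)⟩) ?_ ?_
      · exact Or.inl ⟨Finset.mem_singleton_self u, rfl⟩
      · rw [show (⟨({u} : Finset (Fin (N m))).erase u, {nd m (7*m+7)}, blue0 m,
              markedUpTo m (i*m+m)⟩ : PRBPState (Fin (N m))) =
            ⟨∅, dredAt m ((i+1)*m), blue0 m, markedUpTo m ((i+1)*m)⟩ from by
          rw [Finset.erase_singleton,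
            dredAt_pos (show (i+1)*m ≠ 0 from by
              have : 0 < (i+1)*m := Nat.mul_pos (by omega) hm
              omega),
            show i*m+m = (i+1)*m from (Nat.succ_mul i m).symm]]
        exact PRBPReaches.nil _

noncomputable def finalState (m : ℕ) : PRBPState (Fin (N m)) :=
  ⟨insert (nd m (7*m+7)) ∅,
   ({nd m (7*m+7)} : Finset (Fin (N m))).erase (nd m (7*m+7)),
   insert (nd m (7*m+7)) (blue0 m), markedUpTo m (7*m)⟩

lemma full_reaches (hm : 0 < m) :
    PRBPReaches (Gm m) 3 (PRBPInit (Gm m)) (fullList m) (finalState m) := by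
  rw [fullList]
  refine reaches_append
    (t := ⟨∅, {nd m (7*m+7)}, blue0 m, markedUpTo m (7*m)⟩) ?_ ?_
  · have H := outer_reaches hm 0 (by omega)
    rw [show (PRBPInit (Gm m)) =
        (⟨∅, dredAt m (0*m), blue0 m, markedUpTo m (0*m)⟩ :
          PRBPState (Fin (N m))) from by
      rw [PRBPInit, Nat.zero_mul, dredAt, if_pos rfl, markedUpTo_zero]
      rfl]
    exact H
  · refine PRBPReaches.cons ?_ (PRBPReaches.nil _)
    exact ⟨Finset.mem_singleton_self _, rfl⟩

lemma full_valid (hm : 0 < m) : PRBPValid (Gm m) 3 (fullList m) := by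
  refine ⟨finalState m, full_reaches hm, ?_, ?_⟩
  · intro w hw
    have hwv : w = nd m (7*m+7) := by
      rw [Fin.ext_iff, nd_val (show 7*m+7 < N m by simp only [N]; omega)]
      exact (isSink_iff hm w).1 hw
    rw [hwv]
    exact Finset.mem_insert_self _ _
  · intro a b hab
    show (a, b) ∈ markedUpTo m (7*m)
    rw [mem_markedUpTo]
    rcases hab with ⟨h1, h2, h3, h4⟩ | ⟨h1, h2, h3⟩
    · refine ⟨b.val - 7, by omega, Or.inl ⟨?_, ?_⟩⟩
      · rw [Fin.ext_iff, nd_val (show (b.val-7)/m < N m from by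
          have := Nat.div_le_self (b.val-7) m
          simp only [N]; omega)]
        exact h4.symm
      · rw [Fin.ext_iff, nd_val (show 7+(b.val-7) < N m by simp only [N]; omega)]
        omega
    · refine ⟨a.val - 7, by omega, Or.inr ⟨?_, ?_⟩⟩
      · rw [Fin.ext_iff, nd_val (show 7+(a.val-7) < N m by simp only [N]; omega)]
        omega
      · rw [Fin.ext_iff, nd_val (show 7*m+7 < N m by simp only [N]; omega)]
        omega

lemma cost_trip (g j : ℕ) : PRBPCost (trip m g j) = 0 := rfl

lemma cost_inner (i t : ℕ) : PRBPCost (innerList m i t) = 0 := by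
  rw [innerList, cost_bind]
  simp [cost_trip]

lemma cost_block (i : ℕ) : PRBPCost (block m i) = 1 := by
  rw [show block m i = [PRBPMove.load (nd m i)] ++ innerList m i 0
      ++ [PRBPMove.delete (nd m i)] from by rw [block]; simp]
  rw [cost_append, cost_append, cost_inner]
  rfl

lemma cost_outer : PRBPCost (outerList m 0) = 7 := by
  rw [outerList, cost_bind]
  simp [cost_block]

lemma cost_full : PRBPCost (fullList m) = 8 := by
  rw [fullList, cost_append, cost_outer]
  rfl

lemma cost_lower (hm : 0 < m) {L : List (PRBPMove (Fin (N m)))}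
    (hL : PRBPValid (Gm m) 3 L) : 8 ≤ PRBPCost L := by
  obtain ⟨t, hreach, hsink, hmark⟩ := hL
  have hload : ∀ i : ℕ, i < 7 → PRBPMove.load (nd m i) ∈ L := by
    intro i hi
    have hjlt : i*m < 7*m := by
      have : i*m ≤ 6*m := Nat.mul_le_mul_right m (by omega)
      omega
    have hvi : (nd m i).val = i := nd_val (by simp only [N]; omega)
    have hvh : (nd m (7+i*m)).val = 7+i*m := nd_val (by simp only [N]; omega)
    have hsrc : (Gm m).IsSource (nd m i) := (isSource_iff hm _).2 (by omega)
    have hedge : (Gm m).E (nd m i) (nd m (7+i*m)) := by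
      refine Or.inl ⟨by omega, by omega, by omega, ?_⟩
      rw [hvh, hvi, Nat.add_sub_cancel_left, Nat.mul_div_cancel _ hm]
    have H := source_load_mem hreach (nd m i) hsrc (Or.inr ⟨_, hmark _ _ hedge⟩)
    rcases H with H | H
    · exfalso
      have hred0 : (PRBPInit (Gm m)).red = ∅ := by
        rw [PRBPInit, PRBPState.red]; simp
      have hmar0 : (PRBPInit (Gm m)).marked = ∅ := by rw [PRBPInit]
      rcases H with H | ⟨b, hb⟩
      · rw [hred0] at H
        exact Finset.notMem_empty _ H
      · rw [hmar0] at hb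
        exact Finset.notMem_empty _ hb
    · exact H
  have hsave : ∃ w, PRBPMove.save w ∈ L := by
    have hvv : (nd m (7*m+7)).val = 7*m+7 := nd_val (by simp only [N]; omega)
    have hvsink : (Gm m).IsSink (nd m (7*m+7)) := (isSink_iff hm _).2 hvv
    have H := blue_save_mem hreach (nd m (7*m+7)) (hsink _ hvsink)
    rcases H with H | H
    · exfalso
      simp only [PRBPInit, Finset.mem_filter] at H
      have := (isSource_iff hm _).1 H.2
      omega
    · exact H
  obtain ⟨w, hw⟩ := hsave
  classical
  set S : Finset (PRBPMove (Fin (N m))) :=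
    insert (PRBPMove.save w)
      ((Finset.range 7).image (fun i => PRBPMove.load (nd m i))) with hS
  have hcard : 8 ≤ S.card := by
    rw [hS, Finset.card_insert_of_notMem (by simp)]
    have himg : ((Finset.range 7).image
        (fun i => PRBPMove.load (nd m i))).card = 7 := by
      rw [Finset.card_image_of_injOn, Finset.card_range]
      intro a ha b hb he
      have ha' : a < 7 := by simpa using ha
      have hb' : b < 7 := by simpa using hb
      simp only [PRBPMove.load.injEq] at he
      have := congrArg Fin.val he
      rw [nd_val (show a < N m from by simp only [N]; omega),
          nd_val (show b < N m from by simp only [N]; omega)] at this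
      exact this
    omega
  have hsub : S ⊆ (L.filter (fun mv => decide (PRBPMove.ioCost mv = 1))).toFinset := by
    intro x hx
    rw [List.mem_toFinset, List.mem_filter]
    rw [hS] at hx
    rcases Finset.mem_insert.1 hx with rfl | hx
    · exact ⟨hw, rfl⟩
    · obtain ⟨i, hi, rfl⟩ := Finset.mem_image.1 hx
      exact ⟨hload i (Finset.mem_range.1 hi), rfl⟩
  have h1 := Finset.card_le_card hsub
  have h2 := List.toFinset_card_le (L.filter (fun mv => decide (PRBPMove.ioCost mv = 1)))
  have h3 := filter_length_le_cost L
  omega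

lemma optPRBP_eq (hm : 0 < m) : optPRBP (Gm m) 3 = ((8 : ℕ) : ℕ∞) := by
  apply le_antisymm
  · exact sInf_le ⟨fullList m, full_valid hm, congrArg Nat.cast cost_full⟩
  · refine le_sInf ?_
    rintro x ⟨L, hL, rfl⟩
    show ((8 : ℕ) : ℕ∞) ≤ ((PRBPCost L : ℕ) : ℕ∞)
    exact_mod_cast cost_lower hm hL

end SPFail
namespace SPFail
set_option linter.unusedSectionVars false

variable {m : ℕ}

lemma singleton_partition :
    IsSPartition (Gm m) 6 (N m) (fun j => ({j} : Set (Fin (N m)))) := by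
  refine ⟨?_, ?_, ?_, ?_⟩
  · intro v
    exact ⟨v, rfl, fun y hy => (Set.mem_singleton_iff.1 hy).symm⟩
  · intro i j hji u v hu hv hE
    rw [Set.mem_singleton_iff] at hu hv
    subst hu; subst hv
    exact absurd (edge_lt hE) (by exact_mod_cast Nat.not_lt.2 (le_of_lt hji))
  · intro i
    refine ⟨{i}, by simp, ?_⟩
    intro p hp hne hlast
    exact ⟨i, rfl, hlast ▸ List.getLast_mem hne⟩
  · intro i
    have hsub : terminalSet (Gm m) {i} ⊆ {i} := fun x hx => hx.1
    calc (terminalSet (Gm m) {i}).ncard ≤ ({i} : Set (Fin (N m))).ncard :=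
          Set.ncard_le_ncard hsub (Set.toFinite _)
      _ ≤ 6 := by simp

lemma partition_lower (hm : 0 < m) {k : ℕ} {P : Fin k → Set (Fin (N m))}
    (hP : IsSPartition (Gm m) 6 k P) : N m ≤ 50 * k := by
  obtain ⟨huniq, -, hdom, hterm⟩ := hP
  set v := nd m (7*m+7) with hv
  have hvval : v.val = 7*m+7 := nd_val (by simp only [N]; omega)
  obtain ⟨i₀, hvi₀, hvuniq⟩ := huniq v
  obtain ⟨D, hDcard, hDdom⟩ := hdom i₀
  -- find a group avoided by D
  have hfree : ∃ g : ℕ, g < 7 ∧ (nd m g) ∉ D ∧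
      ∀ t < m, nd m (7+(g*m+t)) ∉ D := by
    by_contra hcon
    push_neg at hcon
    have hpick : ∀ g : Fin 7, ∃ x : Fin (N m), x ∈ D ∧
        (x = nd m g.val ∨ ∃ t < m, x = nd m (7+(g.val*m+t))) := by
      intro g
      rcases Classical.em (nd m g.val ∈ D) with h | h
      · exact ⟨nd m g.val, h, Or.inl rfl⟩
      · obtain ⟨t, ht, hx⟩ := hcon g.val g.isLt h
        exact ⟨nd m (7+(g.val*m+t)), hx, Or.inr ⟨t, ht, rfl⟩⟩
    choose f hfD hftag using hpick
    have hinj : Function.Injective f := by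
      intro a b he
      have grp : ∀ g : Fin 7, ((f g).val < 7 ∧ (f g).val = g.val) ∨
          (7 ≤ (f g).val ∧ ((f g).val - 7)/m = g.val) := by
        intro g
        rcases hftag g with h | ⟨t, ht, h⟩
        · left
          have : (f g).val = g.val := by
            rw [h]; exact nd_val (by simp only [N]; omega)
          omega
        · right
          have hgm : g.val*m ≤ 6*m := Nat.mul_le_mul_right m (by omega)
          have hval : (f g).val = 7+(g.val*m+t) := by
            rw [h]; exact nd_val (by simp only [N]; omega)
          refine ⟨by omega, ?_⟩
          rw [hval, Nat.add_sub_cancel_left]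
          exact div_helper hm ht
      have ha := grp a
      have hb := grp b
      rw [he] at ha
      apply Fin.ext
      rcases ha with ⟨h1, h2⟩ | ⟨h1, h2⟩ <;> rcases hb with ⟨h3, h4⟩ | ⟨h3, h4⟩ <;>
        omega
    have h7 : (7 : ℕ) ≤ D.ncard := by
      have hTsub : ((Finset.univ.image f : Finset (Fin (N m))) : Set (Fin (N m))) ⊆ D := by
        intro x hx
        simp only [Finset.coe_image, Set.mem_image, Finset.mem_coe,
          Finset.mem_univ] at hx
        obtain ⟨g, -, rfl⟩ := hx
        exact hfD g
      have hTcard : (Finset.univ.image f).card = 7 := by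
        rw [Finset.card_image_of_injective _ hinj]
        simp
      calc (7:ℕ) = ((Finset.univ.image f : Finset (Fin (N m))) : Set (Fin (N m))).ncard := by
            rw [Set.ncard_coe_finset, hTcard]
        _ ≤ D.ncard := Set.ncard_le_ncard hTsub (Set.toFinite _)
    omega
  obtain ⟨g, hg7, hgD, hHD⟩ := hfree
  have hgm : g*m ≤ 6*m := Nat.mul_le_mul_right m (by omega)
  -- every node of group g is terminal in its class
  have hkey : ∀ t, t < m → ∀ c : Fin k, nd m (7+(g*m+t)) ∈ P c →
      nd m (7+(g*m+t)) ∈ terminalSet (Gm m) (P c) := by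
    intro t ht c hc
    set h' := nd m (7+(g*m+t)) with hh'
    have hh'val : h'.val = 7+(g*m+t) := nd_val (by simp only [N]; omega)
    have hgval : (nd m g).val = g := nd_val (by simp only [N]; omega)
    refine ⟨hc, ?_⟩
    intro w hw hwc
    have hwv : w = v := by
      rcases hw with ⟨h1, _⟩ | ⟨_, _, h3⟩
      · omega
      · rw [Fin.ext_iff, hvval]; exact h3
    rw [hwv] at hwc
    have hc_eq : c = i₀ := hvuniq c hwc
    rw [hc_eq] at hc
    -- dominator must hit the path [u_g, h']
    have hpath : IsSourcePath (Gm m) [nd m g, h'] := by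
      refine ⟨by simp, ?_, ?_⟩
      · refine List.isChain_cons_cons.2 ⟨?_, List.isChain_singleton _⟩
        refine Or.inl ⟨by omega, by omega, by omega, ?_⟩
        rw [hh'val, hgval, Nat.add_sub_cancel_left]
        exact div_helper hm ht
      · intro _
        show (Gm m).IsSource (nd m g)
        exact (isSource_iff hm _).2 (by omega)
    obtain ⟨d, hdD, hdp⟩ := hDdom [nd m g, h'] hpath (by simp)
      (show ([nd m g, h'].getLast (by simp)) ∈ P i₀ from hc)
    rcases List.mem_cons.1 hdp with rfl | hdp
    · exact hgD hdD
    rcases List.mem_cons.1 hdp with rfl | hdp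
    · exact hHD t ht hdD
    · simp at hdp
  -- count classes
  have hcount : ∀ c : Fin k,
      ((Finset.range m).filter (fun t => nd m (7+(g*m+t)) ∈ P c)).card ≤ 6 := by
    intro c
    set F := (Finset.range m).filter (fun t => nd m (7+(g*m+t)) ∈ P c) with hF
    have hinj : Set.InjOn (fun t => nd m (7+(g*m+t))) F := by
      intro a ha b hb he
      have ha' : a < m := Finset.mem_range.1 (Finset.mem_of_mem_filter _ ha)
      have hb' : b < m := Finset.mem_range.1 (Finset.mem_of_mem_filter _ hb)
      have := congrArg Fin.val he
      rw [nd_val (by simp only [N]; omega), nd_val (by simp only [N]; omega)] at this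
      omega
    have hsub : ((F.image (fun t => nd m (7+(g*m+t)))) : Set (Fin (N m))) ⊆
        terminalSet (Gm m) (P c) := by
      intro x hx
      simp only [Finset.coe_image, Set.mem_image, Finset.mem_coe] at hx
      obtain ⟨t, htF, rfl⟩ := hx
      have ht1 : t < m := Finset.mem_range.1 (Finset.mem_of_mem_filter _ htF)
      have ht2 : nd m (7+(g*m+t)) ∈ P c := (Finset.mem_filter.1 htF).2
      exact hkey t ht1 c ht2
    calc F.card = (F.image (fun t => nd m (7+(g*m+t)))).card :=
          (Finset.card_image_of_injOn hinj).symm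
      _ = ((F.image (fun t => nd m (7+(g*m+t)))) : Set (Fin (N m))).ncard :=
          (Set.ncard_coe_finset _).symm
      _ ≤ (terminalSet (Gm m) (P c)).ncard := Set.ncard_le_ncard hsub (Set.toFinite _)
      _ ≤ 6 := hterm c
  have hcover : (Finset.range m).card ≤
      ∑ c : Fin k, ((Finset.range m).filter (fun t => nd m (7+(g*m+t)) ∈ P c)).card := by
    refine le_trans (Finset.card_le_card ?_) (Finset.card_biUnion_le)
    intro t ht
    obtain ⟨c, hc, -⟩ := huniq (nd m (7+(g*m+t)))
    exact Finset.mem_biUnion.2 ⟨c, Finset.mem_univ _, Finset.mem_filter.2 ⟨ht, hc⟩⟩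
  have hm6 : m ≤ k * 6 := by
    have hsum : ∑ c : Fin k, ((Finset.range m).filter
        (fun t => nd m (7+(g*m+t)) ∈ P c)).card ≤ k * 6 := by
      calc _ ≤ ∑ _c : Fin k, 6 := Finset.sum_le_sum (fun c _ => hcount c)
        _ = k * 6 := by simp [Finset.sum_const, Finset.card_univ]
    rw [Finset.card_range] at hcover
    omega
  have hk : 0 < k := i₀.pos
  simp only [N]
  omega

end SPFail
/-- there is a family of DAGs (of strictly growing sizes `f k`)
such that with `r = 3` the optimal PRBP cost is the constant `8` (the trivial
cost), while every Hong–Kung S-partition with `S = 2r = 6` has `Θ(n)` classes;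
hence the Hong–Kung S-partition lower bound `r·(MIN_part(2r) − 1)` fails for PRBP. -/
theorem spartition_bound_fails_for_prbp :
    ∃ (f : ℕ → ℕ) (G : (k : ℕ) → DirGraph (Fin (f k))),
      StrictMono f ∧ (∀ k, (G k).Acyclic) ∧
      (∀ k, optPRBP (G k) 3 = ((8 : ℕ) : ℕ∞)) ∧
      ∃ c₁ c₂ : ℕ, 0 < c₁ ∧ 0 < c₂ ∧
        ∀ k, (∀ (i : ℕ) (P : Fin i → Set (Fin (f k))),
            IsSPartition (G k) 6 i P → f k ≤ c₁ * i) ∧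
          (∃ (i : ℕ) (P : Fin i → Set (Fin (f k))),
            IsSPartition (G k) 6 i P ∧ i ≤ c₂ * f k) := by
  refine ⟨fun k => SPFail.N (k+1), fun k => SPFail.Gm (k+1), ?_, ?_, ?_, 50, 1,
    by omega, by omega, ?_⟩
  · intro a b hab
    simp only [SPFail.N]
    omega
  · intro k
    exact SPFail.acyclic
  · intro k
    exact SPFail.optPRBP_eq (Nat.succ_pos k)
  · intro k
    constructor
    · intro i P hP
      exact SPFail.partition_lower (Nat.succ_pos k) hP
    · exact ⟨SPFail.N (k+1), fun j => ({j} : Set (Fin (SPFail.N (k+1)))),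
        SPFail.singleton_partition, by simp⟩
end

section
/- In the attention computation DAG with sequence length m and head dimension d, in the large cache regime r ≥ d², every (2r)-edge partition class E_i contains at most O(r²/d) internal edges, and hence MIN_edge(2r) ≥ Ω(m²·d²/r²) and OPT_PRBP ≥ Ω(m²·d²/r). -/
open scoped Classical

variable {V : Type} [Fintype V] [DecidableEq V]

/-- Nodes of the (matrix-multiplication part of the) attention DAG: entries of
`Q` (`Fin m × Fin d`), entries of `Kᵀ` (`Fin d × Fin m`), internal nodes
(`Fin m × Fin m × Fin d`), root nodes (`Fin m × Fin m`, entries of `Q·Kᵀ`), and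
one further node per root for the rest of the computation. -/
abbrev AttNode (m d : ℕ) :=
  (Fin m × Fin d) ⊕ ((Fin d × Fin m) ⊕
    ((Fin m × Fin m × Fin d) ⊕ ((Fin m × Fin m) ⊕ (Fin m × Fin m))))

def AttG (m d : ℕ) : DirGraph (AttNode m d) :=
  ⟨fun a b =>
    match a, b with
    | .inl q, .inr (.inr (.inl p)) => p.1 = q.1 ∧ p.2.2 = q.2
    | .inr (.inl kt), .inr (.inr (.inl p)) => p.2.2 = kt.1 ∧ p.2.1 = kt.2
    | .inr (.inr (.inl p)), .inr (.inr (.inr (.inl rt))) => rt.1 = p.1 ∧ rt.2 = p.2.1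
    | .inr (.inr (.inr (.inl rt))), .inr (.inr (.inr (.inr x))) => x = rt
    | _, _ => False⟩

/-- The internal edges: edges from internal nodes to root nodes. -/
def AttInternalEdges (m d : ℕ) : Set (AttNode m d × AttNode m d) :=
  {e | ∃ p : Fin m × Fin m × Fin d,
    e = (.inr (.inr (.inl p)), .inr (.inr (.inr (.inl (p.1, p.2.1)))))}


/-! ### Auxiliary material for the lower bound -/

namespace AttAux

lemma ncard_prod' {α β : Type*} (s : Set α) (t : Set β) :
    (s ×ˢ t).ncard = s.ncard * t.ncard := by
  rw [← Nat.card_coe_set_eq, ← Nat.card_coe_set_eq, ← Nat.card_coe_set_eq,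
    ← Nat.card_prod]
  exact Nat.card_congr (Equiv.Set.prod s t)

lemma ncard_biUnion_le {ι α : Type*} (F : Finset ι) (s : ι → Set α) :
    (⋃ i ∈ F, s i).ncard ≤ ∑ i ∈ F, (s i).ncard := by
  classical
  induction F using Finset.induction with
  | empty => simp
  | insert a F hx ih =>
    rw [Finset.set_biUnion_insert, Finset.sum_insert hx]
    exact le_trans (Set.ncard_union_le _ _) (by omega)

lemma four_mul_le_sq (a b : ℕ) : 4 * (a * b) ≤ (a + b) ^ 2 := by
  rcases le_total a b with h | h
  · obtain ⟨c, rfl⟩ := le_iff_exists_add.mp h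
    nlinarith [sq_nonneg c]
  · obtain ⟨c, rfl⟩ := le_iff_exists_add.mp h
    nlinarith [sq_nonneg c]

variable {m d : ℕ}

abbrev qN (x : Fin m) (kk : Fin d) : AttNode m d := Sum.inl (x, kk)
abbrev kN (kk : Fin d) (y : Fin m) : AttNode m d := Sum.inr (Sum.inl (kk, y))
abbrev iN (x y : Fin m) (kk : Fin d) : AttNode m d :=
  Sum.inr (Sum.inr (Sum.inl (x, y, kk)))
abbrev rN (x y : Fin m) : AttNode m d := Sum.inr (Sum.inr (Sum.inr (Sum.inl (x, y))))
abbrev oN (x y : Fin m) : AttNode m d := Sum.inr (Sum.inr (Sum.inr (Sum.inr (x, y))))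

/-- Project a node to the root it "belongs to" (sources to `none`). -/
def gmap (m d : ℕ) : AttNode m d → Option (Fin m × Fin m)
  | Sum.inl _ => none
  | Sum.inr (Sum.inl _) => none
  | Sum.inr (Sum.inr (Sum.inl p)) => some (p.1, p.2.1)
  | Sum.inr (Sum.inr (Sum.inr (Sum.inl rt))) => some rt
  | Sum.inr (Sum.inr (Sum.inr (Sum.inr rt))) => some rt

def iE (m d : ℕ) (p : Fin m × Fin m × Fin d) : AttNode m d × AttNode m d :=
  (iN p.1 p.2.1 p.2.2, rN p.1 p.2.1)

lemma iE_injective (m d : ℕ) : Function.Injective (iE m d) := by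
  intro p q h
  have h1 := congrArg Prod.fst h
  simp only [iE, iN, Sum.inr.injEq, Sum.inl.injEq, Prod.ext_iff] at h1
  exact Prod.ext h1.1 (Prod.ext h1.2.1 h1.2.2)

lemma internal_eq_image (m d : ℕ) :
    AttInternalEdges m d = iE m d '' Set.univ := by
  ext e
  constructor
  · rintro ⟨p, rfl⟩; exact ⟨p, trivial, rfl⟩
  · rintro ⟨p, -, rfl⟩; exact ⟨p, rfl⟩

lemma internal_ncard (m d : ℕ) : (AttInternalEdges m d).ncard = m ^ 2 * d := by
  rw [internal_eq_image, Set.ncard_image_of_injective _ (iE_injective m d),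
    Set.ncard_univ, Nat.card_eq_fintype_card]
  simp [Fintype.card_prod]
  ring

lemma qN_source (x : Fin m) (kk : Fin d) : (AttG m d).IsSource (qN x kk) := by
  intro u h
  obtain q | kt | p | rt | o := u <;> exact h

lemma kN_source (kk : Fin d) (y : Fin m) : (AttG m d).IsSource (kN kk y) := by
  intro u h
  obtain q | kt | p | rt | o := u <;> exact h

lemma oN_sink (x y : Fin m) : (AttG m d).IsSink (oN x y) := by
  intro u h
  obtain q | kt | p | rt | o := u <;> exact h

lemma oN_not_source (x y : Fin m) : ¬ (AttG m d).IsSource (oN x y) := by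
  intro h
  exact h (rN x y) rfl

lemma rN_out {w : AttNode m d} (x y : Fin m)
    (h : (AttG m d).E (rN x y) w) : w = oN x y := by
  obtain q | kt | p | rt | o := w
  · exact h.elim
  · exact h.elim
  · exact h.elim
  · exact h.elim
  · exact congrArg (fun z => (oN z.1 z.2 : AttNode m d)) h

/-- The per-class bound: any class of a `2r`-edge partition has at most
`5 r ^ 2 / d` internal edges. -/
lemma class_bound (m d r : ℕ) (hd : 1 ≤ d) (hr : d ^ 2 ≤ r) (k : ℕ)
    (P : Fin k → Set (AttNode m d × AttNode m d))
    (hP : IsSEdgePartition (AttG m d) (2 * r) k P) (i : Fin k) :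
    d * ((P i) ∩ AttInternalEdges m d).ncard ≤ 5 * r ^ 2 := by
  obtain ⟨hsub, -, -, hdom, hterm⟩ := hP
  obtain ⟨D, hDcard, hDdom⟩ := hdom i
  have hTcard := hterm i
  set T := edgeTerminalSet (P i) with hTdef
  set touched : Set (Fin m × Fin m) := {rt | some rt ∈ gmap m d '' (D ∪ T)} with htouched_def
  set X : Set (Fin m × Fin m) :=
    {rt | rt ∉ touched ∧ ∃ kk : Fin d, (iN rt.1 rt.2 kk, rN rt.1 rt.2) ∈ P i} with hX_def
  -- nodes of an untouched tree avoid `D ∪ T`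
  have hnt : ∀ x y : Fin m, (x, y) ∉ touched →
      (∀ kk : Fin d, (iN x y kk : AttNode m d) ∉ D ∪ T) ∧
      (rN x y : AttNode m d) ∉ D ∪ T ∧ (oN x y : AttNode m d) ∉ D ∪ T := by
    intro x y h
    refine ⟨fun kk hmem => h ⟨_, hmem, rfl⟩, fun hmem => h ⟨_, hmem, rfl⟩,
      fun hmem => h ⟨_, hmem, rfl⟩⟩
  -- touched trees are few
  have htouched : touched.ncard ≤ 4 * r := by
    have h1 : Option.some '' touched ⊆ gmap m d '' (D ∪ T) := by
      rintro _ ⟨rt, h, rfl⟩; exact h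
    have h2 := Set.ncard_le_ncard h1 ((D ∪ T).toFinite.image _)
    rw [Set.ncard_image_of_injective _ (Option.some_injective _)] at h2
    have h3 := Set.ncard_image_le (s := D ∪ T) (f := gmap m d) (D ∪ T).toFinite
    have h4 := Set.ncard_union_le D T
    omega
  -- untouched trees with an internal edge of `P i` have all their sources in `D`
  have hXsrc : ∀ rt ∈ X, (∀ kk : Fin d, (qN rt.1 kk : AttNode m d) ∈ D) ∧
      (∀ kk : Fin d, (kN kk rt.2 : AttNode m d) ∈ D) := by
    rintro ⟨x, y⟩ ⟨hut, kk₀, hk₀⟩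
    obtain ⟨hiD, hrD, hoD⟩ := hnt x y hut
    have hro : ((rN x y : AttNode m d), (oN x y : AttNode m d)) ∈ P i := by
      have hnotT : (rN x y : AttNode m d) ∉ T := fun h => hrD (Or.inr h)
      obtain ⟨w, hw⟩ : ∃ w, ((rN x y : AttNode m d), w) ∈ P i := by
        by_contra hno
        push_neg at hno
        exact hnotT ⟨⟨_, hk₀⟩, hno⟩
      have hwo : w = oN x y := rN_out (w := w) x y (hsub i hw)
      rwa [hwo] at hw
    have haux : ∀ s : AttNode m d, (AttG m d).IsSource s →
        (AttG m d).E s (iN x y kk₀) →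
        (∀ kk : Fin d, (AttG m d).E s (iN x y kk)) → False ∨ True := fun _ _ _ _ => Or.inr trivial
    constructor
    · intro kk
      have hpath : IsSourcePath (AttG m d)
          [qN x kk, iN x y kk, rN x y, oN x y] := by
        refine ⟨by simp, ?_, fun _ => qN_source x kk⟩
        simp only [List.Chain', List.isChain_cons_cons, List.isChain_singleton, and_true]
        exact ⟨⟨rfl, rfl⟩, ⟨rfl, rfl⟩, rfl⟩
      have hce : PathContainsEdge [qN x kk, iN x y kk, rN x y, (oN x y : AttNode m d)]
          (P i) := ⟨rN x y, oN x y, hro, [qN x kk, iN x y kk], [], by simp⟩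
      obtain ⟨dd, hdD, hdp⟩ := hDdom _ hpath hce
      simp only [List.mem_cons, List.not_mem_nil, or_false] at hdp
      rcases hdp with h | h | h | h
      · rwa [← h]
      · exact absurd (Or.inl (h ▸ hdD)) (hiD kk)
      · exact absurd (Or.inl (h ▸ hdD)) hrD
      · exact absurd (Or.inl (h ▸ hdD)) hoD
    · intro kk
      have hpath : IsSourcePath (AttG m d)
          [kN kk y, iN x y kk, rN x y, oN x y] := by
        refine ⟨by simp, ?_, fun _ => kN_source kk y⟩
        simp only [List.Chain', List.isChain_cons_cons, List.isChain_singleton, and_true]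
        exact ⟨⟨rfl, rfl⟩, ⟨rfl, rfl⟩, rfl⟩
      have hce : PathContainsEdge [kN kk y, iN x y kk, rN x y, (oN x y : AttNode m d)]
          (P i) := ⟨rN x y, oN x y, hro, [kN kk y, iN x y kk], [], by simp⟩
      obtain ⟨dd, hdD, hdp⟩ := hDdom _ hpath hce
      simp only [List.mem_cons, List.not_mem_nil, or_false] at hdp
      rcases hdp with h | h | h | h
      · rwa [← h]
      · exact absurd (Or.inl (h ▸ hdD)) (hiD kk)
      · exact absurd (Or.inl (h ▸ hdD)) hrD
      · exact absurd (Or.inl (h ▸ hdD)) hoD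
  -- rows and columns of the extra trees
  set R : Set (Fin m) := Prod.fst '' X with hR_def
  set C : Set (Fin m) := Prod.snd '' X with hC_def
  have hRC : (R.ncard + C.ncard) * d ≤ 2 * r := by
    set S1 : Set (AttNode m d) :=
      (fun z : Fin m × Fin d => (Sum.inl z : AttNode m d)) '' (R ×ˢ Set.univ) with hS1
    set S2 : Set (AttNode m d) :=
      (fun z : Fin d × Fin m => (Sum.inr (Sum.inl z) : AttNode m d)) '' (Set.univ ×ˢ C)
      with hS2
    have hsub1 : S1 ∪ S2 ⊆ D := by
      rintro n (⟨⟨x', kk⟩, ⟨⟨rt, hrt, rfl⟩, -⟩, rfl⟩ | ⟨⟨kk, y'⟩, ⟨-, ⟨rt, hrt, rfl⟩⟩, rfl⟩)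
      · exact (hXsrc rt hrt).1 kk
      · exact (hXsrc rt hrt).2 kk
    have hdisj : Disjoint S1 S2 := by
      rw [Set.disjoint_left]
      rintro n ⟨z1, -, rfl⟩ ⟨z2, -, h⟩
      exact Sum.inl_ne_inr h.symm
    have hu : S1.ncard + S2.ncard = (S1 ∪ S2).ncard :=
      (Set.ncard_union_eq hdisj S1.toFinite S2.toFinite).symm
    have h1 : S1.ncard = R.ncard * d := by
      rw [hS1, Set.ncard_image_of_injective _ Sum.inl_injective, ncard_prod',
        Set.ncard_univ, Nat.card_eq_fintype_card, Fintype.card_fin]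
    have h2 : S2.ncard = d * C.ncard := by
      have hinj2 : Function.Injective
          (fun z : Fin d × Fin m => (Sum.inr (Sum.inl z) : AttNode m d)) :=
        fun a b h => Sum.inl_injective (Sum.inr_injective h)
      rw [hS2, Set.ncard_image_of_injective _ hinj2, ncard_prod',
        Set.ncard_univ, Nat.card_eq_fintype_card, Fintype.card_fin]
    have h3 : (S1 ∪ S2).ncard ≤ D.ncard := Set.ncard_le_ncard hsub1 D.toFinite
    have h4 : (R.ncard + C.ncard) * d = R.ncard * d + d * C.ncard := by ring
    omega
  have hX2 : X.ncard ≤ R.ncard * C.ncard := by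
    have hXsub : X ⊆ R ×ˢ C := fun rt h => ⟨⟨rt, h, rfl⟩, ⟨rt, h, rfl⟩⟩
    calc X.ncard ≤ (R ×ˢ C).ncard := Set.ncard_le_ncard hXsub (R ×ˢ C).toFinite
      _ = R.ncard * C.ncard := ncard_prod' R C
  -- counting internal edges of the class
  set A : Set (Fin m × Fin m × Fin d) := {p | iE m d p ∈ P i} with hA_def
  have hPA : P i ∩ AttInternalEdges m d = iE m d '' A := by
    ext e
    constructor
    · rintro ⟨hPe, p, rfl⟩; exact ⟨p, hPe, rfl⟩
    · rintro ⟨p, hp, rfl⟩; exact ⟨hp, p, rfl⟩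
  have hψ : Function.Injective
      (fun p : Fin m × Fin m × Fin d => ((p.1, p.2.1), p.2.2)) := by
    intro p q h
    simp only [Prod.ext_iff] at h
    exact Prod.ext h.1.1 (Prod.ext h.1.2 h.2)
  have hAcard : A.ncard ≤ (touched.ncard + X.ncard) * d := by
    have hAsub : (fun p : Fin m × Fin m × Fin d => ((p.1, p.2.1), p.2.2)) '' A ⊆
        (touched ∪ X) ×ˢ (Set.univ : Set (Fin d)) := by
      rintro _ ⟨p, hp, rfl⟩
      refine ⟨?_, trivial⟩
      by_cases h : (p.1, p.2.1) ∈ touched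
      · exact Or.inl h
      · exact Or.inr ⟨h, p.2.2, hp⟩
    calc A.ncard = ((fun p : Fin m × Fin m × Fin d => ((p.1, p.2.1), p.2.2)) '' A).ncard :=
          (Set.ncard_image_of_injective _ hψ).symm
      _ ≤ ((touched ∪ X) ×ˢ (Set.univ : Set (Fin d))).ncard :=
          Set.ncard_le_ncard hAsub ((touched ∪ X) ×ˢ (Set.univ : Set (Fin d))).toFinite
      _ = (touched ∪ X).ncard * d := by
          rw [ncard_prod', Set.ncard_univ, Nat.card_eq_fintype_card, Fintype.card_fin]
      _ ≤ (touched.ncard + X.ncard) * d :=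
          Nat.mul_le_mul_right _ (Set.ncard_union_le _ _)
  rw [hPA, Set.ncard_image_of_injective _ (iE_injective m d)]
  have hxd : X.ncard * d ^ 2 ≤ r ^ 2 := by
    have h5 : 4 * (X.ncard * d ^ 2) ≤ ((R.ncard + C.ncard) * d) ^ 2 := by
      calc 4 * (X.ncard * d ^ 2) ≤ 4 * (R.ncard * C.ncard) * d ^ 2 := by nlinarith [hX2]
        _ ≤ (R.ncard + C.ncard) ^ 2 * d ^ 2 :=
            Nat.mul_le_mul_right _ (four_mul_le_sq _ _)
        _ = ((R.ncard + C.ncard) * d) ^ 2 := by ring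
    have h6 : ((R.ncard + C.ncard) * d) ^ 2 ≤ (2 * r) ^ 2 := Nat.pow_le_pow_left hRC 2
    have h7 : (2 * r) ^ 2 = 4 * r ^ 2 := by ring
    omega
  have htd : touched.ncard * d ^ 2 ≤ 4 * r ^ 2 := by
    calc touched.ncard * d ^ 2 ≤ (4 * r) * d ^ 2 := Nat.mul_le_mul_right _ htouched
      _ ≤ (4 * r) * r := Nat.mul_le_mul_left _ hr
      _ ≤ 4 * r ^ 2 := by nlinarith
  calc d * A.ncard ≤ d * ((touched.ncard + X.ncard) * d) := Nat.mul_le_mul_left _ hAcard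
    _ = touched.ncard * d ^ 2 + X.ncard * d ^ 2 := by ring
    _ ≤ 4 * r ^ 2 + r ^ 2 := add_le_add htd hxd
    _ = 5 * r ^ 2 := by ring

lemma partition_bound (m d r : ℕ) (hd : 1 ≤ d) (hr : d ^ 2 ≤ r) (k : ℕ)
    (P : Fin k → Set (AttNode m d × AttNode m d))
    (hP : IsSEdgePartition (AttG m d) (2 * r) k P) :
    m ^ 2 * d ^ 2 ≤ 5 * r ^ 2 * k := by
  have key := fun i => class_bound m d r hd hr k P hP i
  have hcover : AttInternalEdges m d ⊆
      ⋃ i ∈ (Finset.univ : Finset (Fin k)), (P i ∩ AttInternalEdges m d) := by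
    rintro e ⟨p, rfl⟩
    have hEe : (AttG m d).E (Sum.inr (Sum.inr (Sum.inl p)))
        (Sum.inr (Sum.inr (Sum.inr (Sum.inl (p.1, p.2.1))))) := ⟨rfl, rfl⟩
    obtain ⟨i, hi, -⟩ := hP.2.1 _ _ hEe
    exact Set.mem_biUnion (Finset.mem_univ i) ⟨hi, p, rfl⟩
  have h1 : (AttInternalEdges m d).ncard ≤
      ∑ i : Fin k, (P i ∩ AttInternalEdges m d).ncard :=
    le_trans (Set.ncard_le_ncard hcover
      (⋃ i ∈ (Finset.univ : Finset (Fin k)), (P i ∩ AttInternalEdges m d)).toFinite)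
      (ncard_biUnion_le _ _)
  have h2 : d * (AttInternalEdges m d).ncard ≤ k * (5 * r ^ 2) := by
    calc d * (AttInternalEdges m d).ncard
        ≤ d * ∑ i : Fin k, (P i ∩ AttInternalEdges m d).ncard := Nat.mul_le_mul_left _ h1
      _ = ∑ i : Fin k, d * (P i ∩ AttInternalEdges m d).ncard := Finset.mul_sum _ _ _
      _ ≤ ∑ _i : Fin k, 5 * r ^ 2 := Finset.sum_le_sum fun i _ => key i
      _ = k * (5 * r ^ 2) := by simp [Finset.sum_const, Finset.card_univ]
  rw [internal_ncard] at h2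
  calc m ^ 2 * d ^ 2 = d * (m ^ 2 * d) := by ring
    _ ≤ k * (5 * r ^ 2) := h2
    _ = 5 * r ^ 2 * k := by ring

/-! ### Cost lower bound for PRBP -/

lemma blue_of_reaches {V : Type} [Fintype V] [DecidableEq V] (G : DirGraph V) (r : ℕ)
    {s : PRBPState V} {L : List (PRBPMove V)} {t : PRBPState V}
    (h : PRBPReaches G r s L t) :
    ∀ v ∈ t.blue, v ∈ s.blue ∨ PRBPMove.save v ∈ L := by
  induction h with
  | nil => exact fun v hv => Or.inl hv
  | cons hstep hrest ih =>
    rename_i s' t' u' mv L'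
    clear hrest
    intro v hv
    rcases ih v hv with h' | h'
    · cases mv with
      | save w =>
        rw [hstep.2] at h'
        simp only [Finset.mem_insert] at h'
        rcases h' with rfl | h'
        · exact Or.inr List.mem_cons_self
        · exact Or.inl h'
      | load w =>
        rw [hstep.2.2] at h'
        exact Or.inl h'
      | pcompute u v' =>
        rw [hstep.2.2.2.2.2.2] at h'
        exact Or.inl (Finset.mem_of_mem_erase h')
      | delete w =>
        rcases hstep with ⟨-, h2⟩ | ⟨-, -, h2⟩ <;> rw [h2] at h' <;> exact Or.inl h'
    · exact Or.inr (List.mem_cons_of_mem _ h')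

lemma countP_le_cost {V : Type} (L : List (PRBPMove V)) :
    L.countP (fun mv => 1 ≤ mv.ioCost) ≤ PRBPCost L := by
  induction L with
  | nil => simp [PRBPCost]
  | cons a L ih =>
    have hcost : PRBPCost (a :: L) = a.ioCost + PRBPCost L := by
      simp [PRBPCost]
    rw [List.countP_cons, hcost]
    split
    · rename_i hsplit
      simp only [decide_eq_true_eq] at hsplit
      omega
    · omega

lemma opt_ge (m d r : ℕ) :
    ((m ^ 2 : ℕ) : ℕ∞) ≤ optPRBP (AttG m d) r := by
  refine le_sInf ?_
  rintro x ⟨L, hL, rfl⟩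
  rw [Nat.cast_le]
  obtain ⟨t, hreach, hsinks, -⟩ := hL
  have hsave : ∀ rt : Fin m × Fin m, PRBPMove.save (oN rt.1 rt.2 : AttNode m d) ∈ L := by
    intro rt
    have hblue := hsinks _ (oN_sink rt.1 rt.2)
    rcases blue_of_reaches _ _ hreach _ hblue with h | h
    · exfalso
      have := (Finset.mem_filter.mp h).2
      exact oN_not_source rt.1 rt.2 this
    · exact h
  classical
  set f : Fin m × Fin m → PRBPMove (AttNode m d) :=
    fun rt => PRBPMove.save (oN rt.1 rt.2) with hf
  have hinj : Function.Injective f := by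
    intro a b h
    simp only [hf, PRBPMove.save.injEq, Sum.inr.injEq, Prod.ext_iff] at h
    exact Prod.ext h.1 h.2
  have hmemf : ∀ rt : Fin m × Fin m,
      f rt ∈ (L.filter (fun mv => decide (1 ≤ mv.ioCost))).toFinset := by
    intro rt
    rw [List.mem_toFinset, List.mem_filter]
    exact ⟨hsave rt, by simp [hf, PRBPMove.ioCost]⟩
  have hcard : m ^ 2 ≤ (L.filter (fun mv => decide (1 ≤ mv.ioCost))).toFinset.card := by
    have hle : (Finset.univ : Finset (Fin m × Fin m)).card ≤
        (L.filter (fun mv => decide (1 ≤ mv.ioCost))).toFinset.card :=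
      Finset.card_le_card_of_injOn f (fun rt _ => hmemf rt) hinj.injOn
    simp only [Finset.card_univ, Fintype.card_prod, Fintype.card_fin] at hle
    calc m ^ 2 = m * m := sq m
      _ ≤ _ := hle
  calc m ^ 2 ≤ (L.filter (fun mv => decide (1 ≤ mv.ioCost))).toFinset.card := hcard
    _ ≤ (L.filter (fun mv => decide (1 ≤ mv.ioCost))).length :=
        (L.filter (fun mv => decide (1 ≤ mv.ioCost))).toFinset_card_le
    _ = L.countP (fun mv => decide (1 ≤ mv.ioCost)) := List.countP_eq_length_filter.symm
    _ ≤ PRBPCost L := countP_le_cost L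

end AttAux

/-- in the large cache regime `r ≥ d²`, every class of a
`(2r)`-edge partition of the attention DAG contains at most `O(r²/d)` internal
edges; hence `MIN_edge(2r) ≥ Ω(m²d²/r²)` and `OPT_PRBP ≥ Ω(m²d²/r)`. -/
theorem attention_lower_bound :
    ∃ c : ℕ, 0 < c ∧ ∀ m d r : ℕ, 1 ≤ d → d ^ 2 ≤ r →
      (∀ (k : ℕ) (P : Fin k → Set (AttNode m d × AttNode m d)),
        IsSEdgePartition (AttG m d) (2 * r) k P →
          (∀ i, d * ((P i) ∩ AttInternalEdges m d).ncard ≤ c * r ^ 2) ∧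
          m ^ 2 * d ^ 2 ≤ c * r ^ 2 * k) ∧
      ((m ^ 2 * d ^ 2 : ℕ) : ℕ∞) ≤ ((c * r : ℕ) : ℕ∞) * optPRBP (AttG m d) r := by
  refine ⟨5, by norm_num, fun m d r hd hr => ⟨fun k P hP =>
    ⟨fun i => AttAux.class_bound m d r hd hr k P hP i,
     AttAux.partition_bound m d r hd hr k P hP⟩, ?_⟩⟩
  have h1 := AttAux.opt_ge m d r
  calc ((m ^ 2 * d ^ 2 : ℕ) : ℕ∞) ≤ ((5 * r * m ^ 2 : ℕ) : ℕ∞) := by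
        rw [Nat.cast_le]; nlinarith [hr]
    _ = ((5 * r : ℕ) : ℕ∞) * ((m ^ 2 : ℕ) : ℕ∞) := by push_cast; ring
    _ ≤ ((5 * r : ℕ) : ℕ∞) * optPRBP (AttG m d) r := mul_le_mul_right h1 _
end
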